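/- Let K be a Cantor set with τ(K) ≥ 1. For any finite tree T with edge relation ∼ on vertices {1,...,k+1}, the set Π_T(K × K) = { (x^i·x^j)_{i∼j} : x^1,...,x^{k+1} ∈ K × K } ⊂ ℝ^k has non-empty interior. -/

import Mathlib

open Set

/-- A Cantor set: a non-empty compact, perfect, totally disconnected subset of ℝ. -/
def IsCantorSet (K : Set ℝ) : Prop :=
  K.Nonempty ∧ IsCompact K ∧ Perfect K ∧ IsTotallyDisconnected K

/-- `(a,b)` is a bounded gap of `K`: a bounded connected component of the complement. -/
def IsGap (K : Set ℝ) (a b : ℝ) : Prop :=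
  a < b ∧ a ∈ K ∧ b ∈ K ∧ Set.Ioo a b ∩ K = ∅

/-- Left endpoints of gaps to the right of `u` of length at least `ℓ` (or the right extreme of `K`). -/
def rightTargets (K : Set ℝ) (u ℓ : ℝ) : Set ℝ :=
  {a | u < a ∧ ((∃ b, IsGap K a b ∧ ℓ ≤ b - a) ∨ a = sSup K)}

/-- Right endpoints of gaps to the left of `u` of length at least `ℓ` (or the left extreme of `K`). -/
def leftTargets (K : Set ℝ) (u ℓ : ℝ) : Set ℝ :=
  {b | b < u ∧ ((∃ a, IsGap K a b ∧ ℓ ≤ b - a) ∨ b = sInf K)}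

/-- The set of bridge/gap ratios of `K` at endpoints of bounded gaps. -/
def thicknessValues (K : Set ℝ) : Set ℝ :=
  {r | ∃ a b, IsGap K a b ∧
    (r = (sInf (rightTargets K b (b - a)) - b) / (b - a) ∨
     r = (a - sSup (leftTargets K a (b - a))) / (b - a))}

/-- Newhouse thickness of `K`. -/
noncomputable def thickness (K : Set ℝ) : ℝ := sInf (thicknessValues K)

def rightTargetsEps (K : Set ℝ) (ε u ℓ : ℝ) : Set ℝ :=
  {a | u < a ∧ ((∃ b, IsGap K a b ∧ (1 - ε) * ℓ < b - a) ∨ a = sSup K)}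

def leftTargetsEps (K : Set ℝ) (ε u ℓ : ℝ) : Set ℝ :=
  {b | b < u ∧ ((∃ a, IsGap K a b ∧ (1 - ε) * ℓ < b - a) ∨ b = sInf K)}

def epsThicknessValues (K : Set ℝ) (ε : ℝ) : Set ℝ :=
  {r | ∃ a b, IsGap K a b ∧
    (r = (sInf (rightTargetsEps K ε b (b - a)) - b) / (b - a) ∨
     r = (a - sSup (leftTargetsEps K ε a (b - a))) / (b - a))}

/-- The `ε`-thickness of `K`. -/
noncomputable def epsThickness (K : Set ℝ) (ε : ℝ) : ℝ := sInf (epsThicknessValues K ε)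

/-- Two bounded subsets of ℝ are linked if the interiors of their convex hulls intersect
but neither is contained in the other. -/
def Linked (K1 K2 : Set ℝ) : Prop :=
  (Set.Ioo (sInf K1) (sSup K1) ∩ Set.Ioo (sInf K2) (sSup K2)).Nonempty ∧
  ¬ Set.Ioo (sInf K1) (sSup K1) ⊆ Set.Ioo (sInf K2) (sSup K2) ∧
  ¬ Set.Ioo (sInf K2) (sSup K2) ⊆ Set.Ioo (sInf K1) (sSup K1)

/-- The standard middle-thirds Cantor set. -/
noncomputable def cantorThirds : Set ℝ :=
  ⋂ n : ℕ,
    (fun S : Set ℝ => (fun x : ℝ => x / 3) '' S ∪ (fun x : ℝ => x / 3 + 2/3) '' S)^[n]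
      (Set.Icc 0 1)

/-- A section of the middle-thirds Cantor set: a scaled translated copy of it sitting inside it. -/
def IsCantorSection (S : Set ℝ) : Prop :=
  ∃ (n : ℕ) (a : ℝ), S = (fun x : ℝ => a + x / 3 ^ n) '' cantorThirds ∧ S ⊆ cantorThirds

/-- The open wedge at `x`. -/
def Wedge (x : ℝ × ℝ) : Set (ℝ × ℝ) :=
  {y | y.2 - x.2 < y.1 - x.1 ∧ y.1 - x.1 < 3 * (y.2 - x.2)}


structure NiceSet (A : Set ℝ) : Prop where
  comp : IsCompact A
  nonemp : A.Nonempty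
  acc : ∀ x ∈ A, ∀ ε > 0, ∃ y ∈ A, y ≠ x ∧ |y - x| < ε
  nosub : ∀ x ∈ A, ∀ y ∈ A, x < y → ¬ Icc x y ⊆ A
  thick : ∀ a b, IsGap A a b →
    (b - a ≤ sInf (rightTargets A b (b - a)) - b ∧
     b - a ≤ a - sSup (leftTargets A a (b - a)))

namespace NiceSet

set_option linter.unusedSectionVars false

variable {A : Set ℝ} (hA : NiceSet A)
include hA

lemma closed : IsClosed A := hA.comp.isClosed
lemma bddB : BddBelow A := hA.comp.bddBelow
lemma bddA : BddAbove A := hA.comp.bddAbove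
lemma sInf_mem : sInf A ∈ A := hA.comp.sInf_mem hA.nonemp
lemma sSup_mem : sSup A ∈ A := hA.comp.sSup_mem hA.nonemp
lemma le_sSup' {x : ℝ} (hx : x ∈ A) : x ≤ sSup A := le_csSup hA.bddA hx
lemma sInf_le' {x : ℝ} (hx : x ∈ A) : sInf A ≤ x := csInf_le hA.bddB hx

lemma diam_pos : sInf A < sSup A := by
  obtain ⟨x, hx⟩ := hA.nonemp
  obtain ⟨y, hy, hyx, -⟩ := hA.acc x hx 1 one_pos
  rcases lt_or_gt_of_ne hyx with h | h
  · exact lt_of_le_of_lt (hA.sInf_le' hy) (lt_of_lt_of_le h (hA.le_sSup' hx))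
  · exact lt_of_le_of_lt (hA.sInf_le' hx) (lt_of_lt_of_le h (hA.le_sSup' hy))

lemma gap_lt_sSup {a b : ℝ} (hg : IsGap A a b) : b < sSup A := by
  rcases lt_or_eq_of_le (hA.le_sSup' hg.2.2.1) with h | h
  · exact h
  · exfalso
    obtain ⟨y, hy, hyb, hd⟩ := hA.acc b hg.2.2.1 (b - a) (by linarith [hg.1])
    have h1 : y ≤ b := h ▸ hA.le_sSup' hy
    have h2 : a < y := by rw [abs_lt] at hd; linarith [hd.1]
    have : y ∈ Ioo a b ∩ A := ⟨⟨h2, lt_of_le_of_ne h1 hyb⟩, hy⟩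
    rw [hg.2.2.2] at this; exact this

lemma sInf_lt_gap {a b : ℝ} (hg : IsGap A a b) : sInf A < a := by
  rcases lt_or_eq_of_le (hA.sInf_le' hg.2.1) with h | h
  · exact h
  · exfalso
    obtain ⟨y, hy, hya, hd⟩ := hA.acc a hg.2.1 (b - a) (by linarith [hg.1])
    have h1 : a ≤ y := h ▸ hA.sInf_le' hy
    have h2 : y < b := by rw [abs_lt] at hd; linarith [hd.2]
    have : y ∈ Ioo a b ∩ A := ⟨⟨lt_of_le_of_ne h1 (Ne.symm hya), h2⟩, hy⟩
    rw [hg.2.2.2] at this; exact this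

lemma no_adjacent {a b c : ℝ} (h1 : IsGap A a b) (h2 : IsGap A b c) : False := by
  obtain ⟨y, hy, hyb, hd⟩ := hA.acc b h1.2.2.1 (min (b - a) (c - b))
    (lt_min (by linarith [h1.1]) (by linarith [h2.1]))
  rw [abs_lt] at hd
  have hm1 : min (b-a) (c-b) ≤ b - a := min_le_left _ _
  have hm2 : min (b-a) (c-b) ≤ c - b := min_le_right _ _
  rcases lt_or_gt_of_ne hyb with h | h
  · have : y ∈ Ioo a b ∩ A := ⟨⟨by linarith [hd.1], h⟩, hy⟩
    rw [h1.2.2.2] at this; exact this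
  · have : y ∈ Ioo b c ∩ A := ⟨⟨h, by linarith [hd.2]⟩, hy⟩
    rw [h2.2.2.2] at this; exact this

lemma gap_eq {a b c d : ℝ} (h1 : IsGap A a b) (h2 : IsGap A c d)
    (hcb : c < b) (had : a < d) : a = c ∧ b = d := by
  have hac : a = c := by
    by_contra hne
    rcases lt_or_gt_of_ne hne with h | h
    · have : c ∈ Ioo a b ∩ A := ⟨⟨h, hcb⟩, h2.2.1⟩
      rw [h1.2.2.2] at this; exact this
    · have : a ∈ Ioo c d ∩ A := ⟨⟨h, had⟩, h1.2.1⟩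
      rw [h2.2.2.2] at this; exact this
  refine ⟨hac, ?_⟩
  by_contra hne
  rcases lt_or_gt_of_ne hne with h | h
  · have : b ∈ Ioo c d ∩ A := ⟨⟨hac ▸ h1.1, h⟩, h1.2.2.1⟩
    rw [h2.2.2.2] at this; exact this
  · have : d ∈ Ioo a b ∩ A := ⟨⟨hac ▸ h2.1, h⟩, h2.2.2.1⟩
    rw [h1.2.2.2] at this; exact this

lemma gap_around {x p q : ℝ} (hx : x ∉ A) (hp : p ∈ A) (hq : q ∈ A)
    (hpx : p < x) (hxq : x < q) :
    ∃ a b, IsGap A a b ∧ a < x ∧ x < b ∧ p ≤ a ∧ b ≤ q := by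
  set a := sSup (A ∩ Iic x) with ha
  set b := sInf (A ∩ Ici x) with hb
  have hSa : (A ∩ Iic x).Nonempty := ⟨p, hp, le_of_lt hpx⟩
  have hSb : (A ∩ Ici x).Nonempty := ⟨q, hq, le_of_lt hxq⟩
  have hca : IsCompact (A ∩ Iic x) := hA.comp.inter_right isClosed_Iic
  have hcb : IsCompact (A ∩ Ici x) := hA.comp.inter_right isClosed_Ici
  have haM : a ∈ A ∩ Iic x := hca.sSup_mem hSa
  have hbM : b ∈ A ∩ Ici x := hcb.sInf_mem hSb
  have hax : a < x := lt_of_le_of_ne haM.2 (fun h => hx (h ▸ haM.1))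
  have hxb : x < b := lt_of_le_of_ne hbM.2 (fun h => hx (h ▸ hbM.1))
  refine ⟨a, b, ⟨lt_trans hax hxb, haM.1, hbM.1, ?_⟩, hax, hxb, ?_, ?_⟩
  · ext y; simp only [mem_inter_iff, mem_Ioo, mem_empty_iff_false, iff_false, not_and]
    rintro ⟨hy1, hy2⟩ hyA
    rcases le_or_gt y x with h | h
    · exact absurd (le_csSup hca.bddAbove ⟨hyA, h⟩) (not_le_of_gt hy1)
    · exact absurd (csInf_le hcb.bddBelow ⟨hyA, le_of_lt h⟩) (not_le_of_gt hy2)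
  · exact le_csSup hca.bddAbove ⟨hp, le_of_lt hpx⟩
  · exact csInf_le hcb.bddBelow ⟨hq, le_of_lt hxq⟩

/-- there is a gap strictly inside any interval with endpoints in A -/
lemma exists_gap_between {p q : ℝ} (hp : p ∈ A) (hq : q ∈ A) (hpq : p < q) :
    ∃ a b, IsGap A a b ∧ p ≤ a ∧ a < b ∧ b ≤ q := by
  have := hA.nosub p hp q hq hpq
  rw [not_subset] at this
  obtain ⟨x, hx1, hx2⟩ := this
  have hxp : p < x := lt_of_le_of_ne hx1.1 (fun h => hx2 (h ▸ hp))
  have hxq : x < q := lt_of_le_of_ne hx1.2 (fun h => hx2 (h.symm ▸ hq))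
  obtain ⟨a, b, hg, _, _, h1, h2⟩ := hA.gap_around hx2 hp hq hxp hxq
  exact ⟨a, b, hg, h1, hg.1, h2⟩

/-- from right endpoint of a gap, gaps exist at arbitrarily small scales to the right -/
lemma exists_gap_small {a1 b1 : ℝ} (hg : IsGap A a1 b1) {ε : ℝ} (hε : 0 < ε) :
    ∃ x y, IsGap A x y ∧ b1 < x ∧ x < y ∧ y ≤ b1 + ε := by
  obtain ⟨y0, hy0, hy0b, hy0d⟩ := hA.acc b1 hg.2.2.1 (min ε (b1 - a1))
    (lt_min hε (by linarith [hg.1]))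
  rw [abs_lt] at hy0d
  have hm1 : min ε (b1-a1) ≤ ε := min_le_left _ _
  have hm2 : min ε (b1-a1) ≤ b1-a1 := min_le_right _ _
  have hy0gt : b1 < y0 := by
    rcases lt_or_gt_of_ne hy0b with h | h
    · exfalso
      have : y0 ∈ Ioo a1 b1 ∩ A := ⟨⟨by linarith [hy0d.1], h⟩, hy0⟩
      rw [hg.2.2.2] at this; exact this
    · exact h
  obtain ⟨x, y, hgxy, hx1, hxy, hy1⟩ := hA.exists_gap_between hg.2.2.1 hy0 hy0gt
  have hb1x : b1 < x := by
    rcases lt_or_eq_of_le hx1 with h | h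
    · exact h
    · exact absurd (h ▸ hgxy) (fun hh => hA.no_adjacent hg hh)
  exact ⟨x, y, hgxy, hb1x, hxy, by linarith [hy0d.2]⟩

lemma gap3 {a b : ℝ} (hg : IsGap A a b) : 3 * (b - a) ≤ sSup A - sInf A := by
  obtain ⟨hr, hl⟩ := hA.thick a b hg
  have h1 : sInf (rightTargets A b (b - a)) ≤ sSup A := by
    apply csInf_le ⟨b, fun x hx => le_of_lt hx.1⟩
    exact ⟨hA.gap_lt_sSup hg, Or.inr rfl⟩
  have h2 : sInf A ≤ sSup (leftTargets A a (b - a)) := by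
    apply le_csSup ⟨a, fun x hx => le_of_lt hx.1⟩
    exact ⟨hA.sInf_lt_gap hg, Or.inr rfl⟩
  linarith

end NiceSet
section Engine

set_option linter.unusedSectionVars false

lemma compact_sep {A B : Set ℝ} (hA : IsCompact A) (hB : IsCompact B)
    (hne : A.Nonempty) (hne' : B.Nonempty) (hd : A ∩ B = ∅) :
    ∃ ε > 0, ∀ x ∈ A, ∀ y ∈ B, ε ≤ |x - y| := by
  have hAB : IsCompact (A ×ˢ B) := hA.prod hB
  have hABne : (A ×ˢ B).Nonempty := hne.prod hne'
  have hcont : ContinuousOn (fun p : ℝ × ℝ => |p.1 - p.2|) (A ×ˢ B) :=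
    ((continuous_fst.sub continuous_snd).abs).continuousOn
  obtain ⟨p0, hp0, hmin⟩ := hAB.exists_isMinOn hABne hcont
  refine ⟨|p0.1 - p0.2|, ?_, ?_⟩
  · show (0:ℝ) < |p0.1 - p0.2|
    rw [abs_pos, sub_ne_zero]
    intro h
    have : p0.1 ∈ A ∩ B := ⟨(Set.mem_prod.mp hp0).1, h ▸ (Set.mem_prod.mp hp0).2⟩
    rw [hd] at this; exact this
  · intro x hx y hy
    exact hmin (Set.mk_mem_prod hx hy)


lemma big_gaps_finite {A : Set ℝ} (hA : NiceSet A) {ε : ℝ} (hε : 0 < ε) :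
    {g : ℝ × ℝ | IsGap A g.1 g.2 ∧ ε ≤ g.2 - g.1}.Finite := by
  set S := {g : ℝ × ℝ | IsGap A g.1 g.2 ∧ ε ≤ g.2 - g.1} with hS
  have hsep : ∀ g ∈ S, ∀ g' ∈ S, g ≠ g' → ε ≤ |g.1 - g'.1| := by
    rintro ⟨a, b⟩ hg ⟨c, d⟩ hg' hne
    simp only [hS, Set.mem_setOf_eq] at hg hg'
    by_cases hac : a = c
    · exfalso; apply hne
      obtain ⟨-, h2⟩ := NiceSet.gap_eq hA hg.1 hg'.1 (hac ▸ hg.1.1) (hac ▸ hg'.1.1)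
      rw [Prod.mk.injEq]; exact ⟨hac, h2⟩
    · rcases lt_or_gt_of_ne hac with h | h
      · have hcb : ¬ (c < b) := by
          intro hcb
          obtain ⟨h1, -⟩ := NiceSet.gap_eq hA hg.1 hg'.1 hcb (lt_trans h hg'.1.1)
          exact hac h1
        push_neg at hcb
        rw [abs_sub_comm, abs_of_nonneg (by linarith)]
        linarith [hg.2]
      · have hcb : ¬ (a < d) := by
          intro hcb
          obtain ⟨h1, -⟩ := NiceSet.gap_eq hA hg'.1 hg.1 hcb (lt_trans h hg.1.1)
          exact hac h1.symm
        push_neg at hcb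
        rw [abs_of_nonneg (by linarith)]
        linarith [hg'.2]
  rw [← Set.not_infinite]
  intro hinf
  have hinj : Set.InjOn (fun g : ℝ × ℝ => ⌊g.1 / ε⌋) S := by
    intro g hg g' hg' he
    by_contra hne
    have h1 := hsep g hg g' hg' hne
    simp only at he
    have h2 : |g.1 / ε - g'.1 / ε| < 1 := by
      have h3 := Int.floor_le (g.1/ε)
      have h4 := Int.floor_le (g'.1/ε)
      have h5 := Int.lt_floor_add_one (g.1/ε)
      have h6 := Int.lt_floor_add_one (g'.1/ε)
      rw [he] at h3 h5
      rw [abs_lt]; constructor <;> linarith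
    rw [div_sub_div_same, abs_div, abs_of_pos hε, div_lt_one hε] at h2
    exact absurd h1 (not_le_of_gt h2)
  have himg : ((fun g : ℝ × ℝ => ⌊g.1 / ε⌋) '' S).Finite := by
    apply Set.Finite.subset (Set.finite_Icc ⌊sInf A / ε⌋ ⌊sSup A / ε⌋)
    rintro z ⟨⟨a, b⟩, hg, rfl⟩
    simp only [hS, Set.mem_setOf_eq] at hg
    have h1 : sInf A ≤ a := hA.sInf_le' hg.1.2.1
    have h2 : a ≤ sSup A := hA.le_sSup' hg.1.2.1
    simp only [Set.mem_Icc]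
    exact ⟨Int.floor_le_floor ((div_le_div_iff_of_pos_right hε).mpr h1),
           Int.floor_le_floor ((div_le_div_iff_of_pos_right hε).mpr h2)⟩
  exact hinf (Set.Finite.of_finite_image himg hinj)

end Engine
section Engine2
set_option linter.unusedSectionVars false
set_option maxHeartbeats 1000000

lemma core_step {X Y : Set ℝ} (hX : NiceSet X) (hY : NiceSet Y)
    (hd : ∀ x ∈ X, ∀ y ∈ Y, x ≠ y)
    {p q u v : ℝ} (gx : IsGap X p q) (gy : IsGap Y u v)
    (o1 : p < u) (o2 : u < q) (o3 : q < v) (hc : v - u ≤ q - p) :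
    ∃ p' q', IsGap X p' q' ∧ u < p' ∧ p' < v ∧ v < q' ∧ q' - p' < q - p := by
  set R := sInf (rightTargets X q (q - p)) with hR
  have hth := (hX.thick p q gx).1
  have hbdd : BddBelow (rightTargets X q (q - p)) := ⟨q, fun x hx => le_of_lt hx.1⟩
  have hRS : R ≤ sSup X := csInf_le hbdd ⟨hX.gap_lt_sSup gx, Or.inr rfl⟩
  have hvR : v < R := by linarith
  have hvX : v ∉ X := fun h => hd v h v gy.2.2.1 rfl
  obtain ⟨p', q', hg', hp'v, hvq', hqp', hq'S⟩ :=
    hX.gap_around hvX gx.2.2.1 hX.sSup_mem o3 (lt_of_lt_of_le hvR hRS)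
  have hqp'' : q < p' := by
    rcases lt_or_eq_of_le hqp' with h | h
    · exact h
    · exact absurd (h ▸ hg') (fun hh => hX.no_adjacent gx hh)
  refine ⟨p', q', hg', lt_trans o2 hqp'', hp'v, hvq', ?_⟩
  by_contra hlen
  push_neg at hlen
  have : p' ∈ rightTargets X q (q - p) := ⟨hqp'', Or.inl ⟨q', hg', hlen⟩⟩
  have := csInf_le hbdd this
  linarith

lemma core_step_left {X Y : Set ℝ} (hX : NiceSet X) (hY : NiceSet Y)
    (hd : ∀ x ∈ X, ∀ y ∈ Y, x ≠ y)
    {p q u v : ℝ} (gx : IsGap X p q) (gy : IsGap Y u v)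
    (o1 : p < u) (o2 : u < q) (o3 : q < v) (hc : q - p < v - u) :
    ∃ u' v', IsGap Y u' v' ∧ u' < p ∧ p < v' ∧ v' < q ∧ v' - u' < v - u := by
  set L := sSup (leftTargets Y u (v - u)) with hL
  have hth := (hY.thick u v gy).2
  have hbdd : BddAbove (leftTargets Y u (v - u)) := ⟨u, fun x hx => le_of_lt hx.1⟩
  have hLS : sInf Y ≤ L := le_csSup hbdd ⟨hY.sInf_lt_gap gy, Or.inr rfl⟩
  have hLp : L < p := by linarith
  have hpY : p ∉ Y := fun h => hd p gx.2.1 p h rfl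
  obtain ⟨u', v', hg', hu'p, hpv', hiu', hv'u⟩ :=
    hY.gap_around hpY hY.sInf_mem gy.2.1 (lt_of_le_of_lt hLS hLp) o1
  have hv'u' : v' < u := by
    rcases lt_or_eq_of_le hv'u with h | h
    · exact h
    · exact absurd (h ▸ hg') (fun hh => hY.no_adjacent hh gy)
  refine ⟨u', v', hg', hu'p, hpv', lt_trans hv'u' o2, ?_⟩
  by_contra hlen
  push_neg at hlen
  have : v' ∈ leftTargets Y u (v - u) := ⟨hv'u', Or.inl ⟨u', hg', hlen⟩⟩
  have := le_csSup hbdd this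
  linarith

lemma engine {A B : Set ℝ} (hA : NiceSet A) (hB : NiceSet B)
    {a b c d : ℝ} (ga : IsGap A a b) (gb : IsGap B c d)
    (h1 : a < c) (h2 : c < b) (h3 : b < d) : (A ∩ B).Nonempty := by
  by_contra hne
  rw [Set.not_nonempty_iff_eq_empty] at hne
  have hd : ∀ x ∈ A, ∀ y ∈ B, x ≠ y := by
    intro x hx y hy hxy
    have : x ∈ A ∩ B := ⟨hx, hxy ▸ hy⟩
    rw [hne] at this; exact this
  have hd' : ∀ x ∈ B, ∀ y ∈ A, x ≠ y := fun x hx y hy hxy => hd y hy x hx hxy.symm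
  obtain ⟨ε, hε, hsep⟩ := compact_sep hA.comp hB.comp hA.nonemp hB.nonemp hne
  -- configurations
  set Inv : (ℝ × ℝ) × (ℝ × ℝ) → Prop := fun g =>
    IsGap A g.1.1 g.1.2 ∧ IsGap B g.2.1 g.2.2 ∧
    ((g.1.1 < g.2.1 ∧ g.2.1 < g.1.2 ∧ g.1.2 < g.2.2) ∨
     (g.2.1 < g.1.1 ∧ g.1.1 < g.2.2 ∧ g.2.2 < g.1.2)) with hInv
  have hstep : ∀ g, Inv g → ∃ g', Inv g' ∧
      ((g'.1 = g.1 ∧ g'.2.2 - g'.2.1 < g.2.2 - g.2.1) ∨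
       (g'.2 = g.2 ∧ g'.1.2 - g'.1.1 < g.1.2 - g.1.1)) := by
    rintro ⟨⟨p, q⟩, ⟨u, v⟩⟩ ⟨hga, hgb, hord⟩
    rcases hord with ⟨o1, o2, o3⟩ | ⟨o1, o2, o3⟩
    · -- A-gap (p,q) left, B-gap (u,v) right
      rcases le_or_gt (v - u) (q - p) with hc | hc
      · obtain ⟨p', q', hg', k1, k2, k3, k4⟩ := core_step hA hB hd hga hgb o1 o2 o3 hc
        exact ⟨((p', q'), (u, v)), ⟨hg', hgb, Or.inr ⟨k1, k2, k3⟩⟩, Or.inr ⟨rfl, k4⟩⟩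
      · obtain ⟨u', v', hg', k1, k2, k3, k4⟩ := core_step_left hA hB hd hga hgb o1 o2 o3 hc
        exact ⟨((p, q), (u', v')), ⟨hga, hg', Or.inr ⟨k1, k2, k3⟩⟩, Or.inl ⟨rfl, k4⟩⟩
    · -- B-gap (u,v) left, A-gap (p,q) right ; config u < p < v < q
      rcases le_or_gt (q - p) (v - u) with hc | hc
      · obtain ⟨u', v', hg', k1, k2, k3, k4⟩ := core_step hB hA hd' hgb hga o1 o2 o3 hc
        exact ⟨((p, q), (u', v')), ⟨hga, hg', Or.inl ⟨k1, k2, k3⟩⟩, Or.inl ⟨rfl, k4⟩⟩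
      · obtain ⟨p', q', hg', k1, k2, k3, k4⟩ := core_step_left hB hA hd' hgb hga o1 o2 o3 hc
        exact ⟨((p', q'), (u, v)), ⟨hg', hgb, Or.inl ⟨k1, k2, k3⟩⟩, Or.inr ⟨rfl, k4⟩⟩
  -- build the sequence
  have inv0 : Inv ((a, b), (c, d)) := ⟨ga, gb, Or.inl ⟨h1, h2, h3⟩⟩
  let T := {g : (ℝ × ℝ) × (ℝ × ℝ) // Inv g}
  let next : T → T := fun t => ⟨(hstep t.1 t.2).choose, (hstep t.1 t.2).choose_spec.1⟩
  have nextP : ∀ t : T, ((next t).1.1 = t.1.1 ∧ (next t).1.2.2 - (next t).1.2.1 < t.1.2.2 - t.1.2.1) ∨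
      ((next t).1.2 = t.1.2 ∧ (next t).1.1.2 - (next t).1.1.1 < t.1.1.2 - t.1.1.1) :=
    fun t => (hstep t.1 t.2).choose_spec.2
  let seq : ℕ → T := fun n => next^[n] ⟨((a, b), (c, d)), inv0⟩
  have hseqsucc : ∀ n, seq (n + 1) = next (seq n) := fun n => Function.iterate_succ_apply' next n _
  set F : ℕ → ℝ := fun n => ((seq n).1.1.2 - (seq n).1.1.1) + ((seq n).1.2.2 - (seq n).1.2.1) with hF
  have hanti : StrictAnti F := by
    apply strictAnti_nat_of_succ_lt
    intro n
    have := nextP (seq n)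
    rw [← hseqsucc n] at this
    rcases this with ⟨he, hl⟩ | ⟨he, hl⟩
    · simp only [hF]; rw [he]; linarith
    · simp only [hF]; rw [he]; linarith
  -- each gap in the sequence has length > ε
  have hbig : ∀ n, ε ≤ (seq n).1.1.2 - (seq n).1.1.1 ∧ ε ≤ (seq n).1.2.2 - (seq n).1.2.1 := by
    intro n
    obtain ⟨hga', hgb', hord⟩ := (seq n).2
    rcases hord with ⟨o1, o2, o3⟩ | ⟨o1, o2, o3⟩
    · have hs := hsep _ hga'.2.2.1 _ hgb'.2.1
      rw [abs_of_pos (by linarith)] at hs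
      constructor <;> linarith [hga'.1, hgb'.1]
    · have hs := hsep _ hga'.2.1 _ hgb'.2.2.1
      rw [abs_of_neg (by linarith)] at hs
      constructor <;> linarith [hga'.1, hgb'.1]
  -- finiteness contradiction
  have hSA := big_gaps_finite hA hε
  have hSB := big_gaps_finite hB hε
  have hrange : Set.range F ⊆ (fun g : (ℝ × ℝ) × (ℝ × ℝ) => (g.1.2 - g.1.1) + (g.2.2 - g.2.1)) ''
      ({g : ℝ × ℝ | IsGap A g.1 g.2 ∧ ε ≤ g.2 - g.1} ×ˢ {g : ℝ × ℝ | IsGap B g.1 g.2 ∧ ε ≤ g.2 - g.1}) := by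
    rintro x ⟨n, rfl⟩
    exact ⟨(seq n).1, ⟨⟨(seq n).2.1, (hbig n).1⟩, ⟨(seq n).2.2.1, (hbig n).2⟩⟩, rfl⟩
  have hfin : (Set.range F).Finite := Set.Finite.subset ((hSA.prod hSB).image _) hrange
  exact (Set.infinite_range_of_injective hanti.injective) hfin

end Engine2
section Overlap
set_option linter.unusedSectionVars false

lemma inter_of_overlap_aux {A B : Set ℝ} (hA : NiceSet A) (hB : NiceSet B)
    (hsb : sSup B ≤ sSup A)
    (hov : max (sInf A) (sInf B) + max (sSup A - sInf A) (sSup B - sInf B) / 3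
      ≤ min (sSup A) (sSup B)) :
    (A ∩ B).Nonempty := by
  set m := max (sInf A) (sInf B) with hm
  set M := min (sSup A) (sSup B) with hM
  set g := max (sSup A - sInf A) (sSup B - sInf B) / 3 with hg
  have hg0 : 0 < g := by
    have := hA.diam_pos
    have h1 : sSup A - sInf A ≤ max (sSup A - sInf A) (sSup B - sInf B) := le_max_left _ _
    simp only [hg]; linarith
  set x := sSup B with hx
  have hxB : x ∈ B := hB.sSup_mem
  by_cases hxA : x ∈ A
  · exact ⟨x, hxA, hxB⟩
  have hMx : M ≤ x := min_le_right _ _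
  have hxlt : x < sSup A := lt_of_le_of_ne hsb (fun h => hxA (h ▸ hA.sSup_mem))
  have hxgt : sInf A < x := by
    have h1 : sInf A ≤ m := le_max_left _ _
    linarith [hov]
  obtain ⟨a1, b1, hgab, ha1x, hxb1, -, -⟩ :=
    hA.gap_around hxA hA.sInf_mem hA.sSup_mem hxgt hxlt
  have hlen : b1 - a1 ≤ g := by
    have := hA.gap3 hgab
    have h1 : sSup A - sInf A ≤ max (sSup A - sInf A) (sSup B - sInf B) := le_max_left _ _
    simp only [hg]; linarith
  have ha1B' : sInf B < a1 := by
    have h1 : sInf B ≤ m := le_max_right _ _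
    have : x - (b1 - a1) < a1 := by linarith [hgab.1]
    linarith [hov, hMx]
  by_cases ha1B : a1 ∈ B
  · exact ⟨a1, hgab.2.1, ha1B⟩
  obtain ⟨c1, d1, hgcd, hc1, hd1, -, hd1x⟩ :=
    hB.gap_around ha1B hB.sInf_mem hxB ha1B' ha1x
  have hd1x' : d1 < x := lt_of_le_of_ne hd1x (fun h => absurd (h ▸ hgcd) (fun hh => absurd (hB.gap_lt_sSup hh) (lt_irrefl x)))
  obtain ⟨z, hz1, hz2⟩ := engine hB hA hgcd hgab hc1 hd1 (lt_trans hd1x' hxb1)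
  exact ⟨z, hz2, hz1⟩

lemma inter_of_overlap {A B : Set ℝ} (hA : NiceSet A) (hB : NiceSet B)
    (hov : max (sInf A) (sInf B) + max (sSup A - sInf A) (sSup B - sInf B) / 3
      ≤ min (sSup A) (sSup B)) :
    (A ∩ B).Nonempty := by
  rcases le_total (sSup B) (sSup A) with h | h
  · exact inter_of_overlap_aux hA hB h hov
  · rw [Set.inter_comm]
    apply inter_of_overlap_aux hB hA h
    rw [max_comm (sInf B), max_comm (sSup B - sInf B), min_comm (sSup B)]
    exact hov

end Overlap

section Affine
set_option linter.unusedSectionVars false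

variable {S A : Set ℝ} {c d : ℝ}

lemma sSup_aff_pos (hc : 0 < c) (hS : S.Nonempty) (hb : BddAbove S) :
    sSup ((fun x => c * x + d) '' S) = c * sSup S + d := by
  apply IsLUB.csSup_eq _ (hS.image _)
  constructor
  · rintro y ⟨x, hx, rfl⟩
    have := le_csSup hb hx
    simp only
    nlinarith
  · intro w hw
    have h1 : sSup S ≤ (w - d) / c := by
      apply csSup_le hS
      intro x hx
      have := hw ⟨x, hx, rfl⟩
      simp only at this
      rw [le_div_iff₀ hc]; linarith
    rw [le_div_iff₀ hc] at h1; linarith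

lemma sInf_aff_pos (hc : 0 < c) (hS : S.Nonempty) (hb : BddBelow S) :
    sInf ((fun x => c * x + d) '' S) = c * sInf S + d := by
  apply IsGLB.csInf_eq _ (hS.image _)
  constructor
  · rintro y ⟨x, hx, rfl⟩
    have := csInf_le hb hx
    simp only
    nlinarith
  · intro w hw
    have h1 : (w - d) / c ≤ sInf S := by
      apply le_csInf hS
      intro x hx
      have := hw ⟨x, hx, rfl⟩
      simp only at this
      rw [div_le_iff₀ hc]; linarith
    rw [div_le_iff₀ hc] at h1; linarith

lemma sSup_neg_img (hS : S.Nonempty) (hb : BddBelow S) :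
    sSup (Neg.neg '' S) = - sInf S := by
  apply IsLUB.csSup_eq _ (hS.image _)
  constructor
  · rintro y ⟨x, hx, rfl⟩
    have := csInf_le hb hx
    show -x ≤ -sInf S
    linarith
  · intro w hw
    have h1 : -w ≤ sInf S := by
      apply le_csInf hS
      intro x hx
      have := hw ⟨x, hx, rfl⟩
      linarith
    linarith

lemma sInf_neg_img (hS : S.Nonempty) (hb : BddAbove S) :
    sInf (Neg.neg '' S) = - sSup S := by
  apply IsGLB.csInf_eq _ (hS.image _)
  constructor
  · rintro y ⟨x, hx, rfl⟩
    have := le_csSup hb hx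
    show -sSup S ≤ -x
    linarith
  · intro w hw
    have h1 : sSup S ≤ -w := by
      apply csSup_le hS
      intro x hx
      have := hw ⟨x, hx, rfl⟩
      linarith
    linarith

lemma aff_inj (hc : c ≠ 0) : Function.Injective (fun x : ℝ => c * x + d) := by
  intro x y h
  simp only at h
  have : c * x = c * y := by linarith
  exact mul_left_cancel₀ hc this

lemma isGap_aff_pos (hc : 0 < c) {a b : ℝ} :
    IsGap ((fun x => c * x + d) '' A) (c * a + d) (c * b + d) ↔ IsGap A a b := by
  constructor
  · rintro ⟨h1, ⟨a', ha', ha2⟩, ⟨b', hb', hb2⟩, h4⟩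
    have haa : a' = a := aff_inj (ne_of_gt hc) ha2
    have hbb : b' = b := aff_inj (ne_of_gt hc) hb2
    subst haa; subst hbb
    refine ⟨by nlinarith, ha', hb', ?_⟩
    ext z; simp only [Set.mem_inter_iff, Set.mem_Ioo, Set.mem_empty_iff_false, iff_false, not_and]
    rintro ⟨hz1, hz2⟩ hz3
    have : c * z + d ∈ Set.Ioo (c * a' + d) (c * b' + d) ∩ ((fun x => c * x + d) '' A) :=
      ⟨⟨by nlinarith, by nlinarith⟩, ⟨z, hz3, rfl⟩⟩
    rw [h4] at this; exact this
  · rintro ⟨h1, h2, h3, h4⟩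
    refine ⟨by nlinarith, ⟨a, h2, rfl⟩, ⟨b, h3, rfl⟩, ?_⟩
    ext z; simp only [Set.mem_inter_iff, Set.mem_Ioo, Set.mem_empty_iff_false, iff_false, not_and]
    rintro ⟨hz1, hz2⟩ ⟨w, hw, rfl⟩
    have hz1' : c * a + d < c * w + d := hz1
    have hz2' : c * w + d < c * b + d := hz2
    have : w ∈ Set.Ioo a b ∩ A := ⟨⟨by nlinarith, by nlinarith⟩, hw⟩
    rw [h4] at this; exact this

lemma isGap_aff_pos' (hc : 0 < c) {x y : ℝ} (h : IsGap ((fun x => c * x + d) '' A) x y) :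
    ∃ a b, x = c * a + d ∧ y = c * b + d ∧ IsGap A a b := by
  obtain ⟨-, ⟨a', ha', ha2⟩, ⟨b', hb', hb2⟩, -⟩ := id h
  have ha2' : c * a' + d = x := ha2
  have hb2' : c * b' + d = y := hb2
  refine ⟨a', b', ha2'.symm, hb2'.symm, ?_⟩
  rw [← isGap_aff_pos hc (A := A) (d := d), ha2', hb2']
  exact h

lemma isGap_neg {a b : ℝ} : IsGap (Neg.neg '' A) (-b) (-a) ↔ IsGap A a b := by
  constructor
  · rintro ⟨h1, ⟨b', hb', hb2⟩, ⟨a', ha', ha2⟩, h4⟩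
    have : b' = b := by linarith [neg_eq_iff_eq_neg.mp hb2]
    subst this
    have : a' = a := by linarith [neg_eq_iff_eq_neg.mp ha2]
    subst this
    refine ⟨by linarith, ha', hb', ?_⟩
    ext z; simp only [Set.mem_inter_iff, Set.mem_Ioo, Set.mem_empty_iff_false, iff_false, not_and]
    rintro ⟨hz1, hz2⟩ hz3
    have : -z ∈ Set.Ioo (-b') (-a') ∩ (Neg.neg '' A) := ⟨⟨by linarith, by linarith⟩, ⟨z, hz3, rfl⟩⟩
    rw [h4] at this; exact this
  · rintro ⟨h1, h2, h3, h4⟩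
    refine ⟨by linarith, ⟨b, h3, rfl⟩, ⟨a, h2, rfl⟩, ?_⟩
    ext z; simp only [Set.mem_inter_iff, Set.mem_Ioo, Set.mem_empty_iff_false, iff_false, not_and]
    rintro ⟨hz1, hz2⟩ ⟨w, hw, rfl⟩
    have : w ∈ Set.Ioo a b ∩ A := ⟨⟨by linarith, by linarith⟩, hw⟩
    rw [h4] at this; exact this

lemma isGap_neg' {x y : ℝ} (h : IsGap (Neg.neg '' A) x y) :
    ∃ a b, x = -b ∧ y = -a ∧ IsGap A a b := by
  obtain ⟨-, ⟨b', hb', hb2⟩, ⟨a', ha', ha2⟩, -⟩ := id h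
  have hb2' : -b' = x := hb2
  have ha2' : -a' = y := ha2
  refine ⟨a', b', hb2'.symm, ha2'.symm, ?_⟩
  rw [← isGap_neg (A := A), hb2', ha2']
  exact h

end Affine
section Transport
set_option linter.unusedSectionVars false

variable {A : Set ℝ} {c d : ℝ}

lemma rightTargets_aff_pos (hc : 0 < c) (hA : NiceSet A) (u ℓ : ℝ) :
    rightTargets ((fun x => c * x + d) '' A) (c * u + d) (c * ℓ)
      = (fun x => c * x + d) '' rightTargets A u ℓ := by
  ext e
  constructor
  · rintro ⟨he1, hd'⟩
    rcases hd' with ⟨s, hgap, hlen⟩ | hsup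
    · obtain ⟨a', b', rfl, rfl, hg⟩ := isGap_aff_pos' hc hgap
      refine ⟨a', ⟨?_, Or.inl ⟨b', hg, ?_⟩⟩, rfl⟩
      · nlinarith
      · nlinarith
    · rw [sSup_aff_pos hc hA.nonemp hA.bddA] at hsup
      refine ⟨sSup A, ⟨?_, Or.inr rfl⟩, hsup.symm⟩
      nlinarith [hsup]
  · rintro ⟨a', ⟨ha1, hd'⟩, rfl⟩
    refine ⟨by show c*u+d < c*a'+d; nlinarith, ?_⟩
    rcases hd' with ⟨b', hg, hlen⟩ | hsup
    · exact Or.inl ⟨c * b' + d, (isGap_aff_pos hc).mpr hg,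
        by show c * ℓ ≤ (c * b' + d) - (c * a' + d); nlinarith⟩
    · right
      rw [sSup_aff_pos hc hA.nonemp hA.bddA, hsup]

lemma leftTargets_aff_pos (hc : 0 < c) (hA : NiceSet A) (u ℓ : ℝ) :
    leftTargets ((fun x => c * x + d) '' A) (c * u + d) (c * ℓ)
      = (fun x => c * x + d) '' leftTargets A u ℓ := by
  ext e
  constructor
  · rintro ⟨he1, hd'⟩
    rcases hd' with ⟨s, hgap, hlen⟩ | hinf
    · obtain ⟨a', b', rfl, rfl, hg⟩ := isGap_aff_pos' hc hgap
      refine ⟨b', ⟨?_, Or.inl ⟨a', hg, ?_⟩⟩, rfl⟩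
      · nlinarith
      · nlinarith
    · rw [sInf_aff_pos hc hA.nonemp hA.bddB] at hinf
      refine ⟨sInf A, ⟨?_, Or.inr rfl⟩, hinf.symm⟩
      nlinarith [hinf]
  · rintro ⟨b', ⟨hb1, hd'⟩, rfl⟩
    refine ⟨by show c*b'+d < c*u+d; nlinarith, ?_⟩
    rcases hd' with ⟨a', hg, hlen⟩ | hinf
    · exact Or.inl ⟨c * a' + d, (isGap_aff_pos hc).mpr hg,
        by show c * ℓ ≤ (c * b' + d) - (c * a' + d); nlinarith⟩
    · right
      rw [sInf_aff_pos hc hA.nonemp hA.bddB, hinf]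

lemma rightTargets_neg (hA : NiceSet A) (u ℓ : ℝ) :
    rightTargets (Neg.neg '' A) (-u) ℓ = Neg.neg '' leftTargets A u ℓ := by
  ext e
  constructor
  · rintro ⟨he1, hd'⟩
    rcases hd' with ⟨s, hgap, hlen⟩ | hsup
    · obtain ⟨a', b', rfl, rfl, hg⟩ := isGap_neg' hgap
      refine ⟨b', ⟨by linarith, Or.inl ⟨a', hg, by linarith⟩⟩, rfl⟩
    · rw [sSup_neg_img hA.nonemp hA.bddB] at hsup
      refine ⟨sInf A, ⟨by linarith [hsup], Or.inr rfl⟩, hsup.symm⟩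
  · rintro ⟨b', ⟨hb1, hd'⟩, rfl⟩
    refine ⟨by show -u < -b'; linarith, ?_⟩
    rcases hd' with ⟨a', hg, hlen⟩ | hinf
    · exact Or.inl ⟨-a', isGap_neg.mpr hg, by linarith⟩
    · right
      rw [sSup_neg_img hA.nonemp hA.bddB, hinf]

lemma leftTargets_neg (hA : NiceSet A) (u ℓ : ℝ) :
    leftTargets (Neg.neg '' A) (-u) ℓ = Neg.neg '' rightTargets A u ℓ := by
  ext e
  constructor
  · rintro ⟨he1, hd'⟩
    rcases hd' with ⟨s, hgap, hlen⟩ | hinf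
    · obtain ⟨a', b', rfl, rfl, hg⟩ := isGap_neg' hgap
      refine ⟨a', ⟨by linarith, Or.inl ⟨b', hg, by linarith⟩⟩, rfl⟩
    · rw [sInf_neg_img hA.nonemp hA.bddA] at hinf
      refine ⟨sSup A, ⟨by linarith [hinf], Or.inr rfl⟩, hinf.symm⟩
  · rintro ⟨a', ⟨ha1, hd'⟩, rfl⟩
    refine ⟨by show -a' < -u; linarith, ?_⟩
    rcases hd' with ⟨b', hg, hlen⟩ | hsup
    · exact Or.inl ⟨-b', isGap_neg.mpr hg, by linarith⟩
    · right
      rw [sInf_neg_img hA.nonemp hA.bddA, hsup]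

lemma rt_nonempty (hA : NiceSet A) {a b : ℝ} (hg : IsGap A a b) {ℓ : ℝ} :
    (rightTargets A b ℓ).Nonempty := ⟨sSup A, hA.gap_lt_sSup hg, Or.inr rfl⟩

lemma rt_bddBelow {K : Set ℝ} {u ℓ : ℝ} : BddBelow (rightTargets K u ℓ) :=
  ⟨u, fun x hx => le_of_lt hx.1⟩

lemma lt_nonempty (hA : NiceSet A) {a b : ℝ} (hg : IsGap A a b) {ℓ : ℝ} :
    (leftTargets A a ℓ).Nonempty := ⟨sInf A, hA.sInf_lt_gap hg, Or.inr rfl⟩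

lemma lt_bddAbove {K : Set ℝ} {u ℓ : ℝ} : BddAbove (leftTargets K u ℓ) :=
  ⟨u, fun x hx => le_of_lt hx.1⟩

lemma nice_aff_pos (hA : NiceSet A) (hc : 0 < c) :
    NiceSet ((fun x => c * x + d) '' A) := by
  constructor
  · exact hA.comp.image (by fun_prop)
  · exact hA.nonemp.image _
  · rintro y ⟨x, hx, rfl⟩ ε hε
    obtain ⟨y', hy', hne, hd'⟩ := hA.acc x hx (ε / c) (div_pos hε hc)
    refine ⟨c * y' + d, ⟨y', hy', rfl⟩, ?_, ?_⟩
    · intro h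
      exact hne (aff_inj (ne_of_gt hc) h)
    · show |c * y' + d - (c * x + d)| < ε
      have : c * y' + d - (c * x + d) = c * (y' - x) := by ring
      rw [this, abs_mul, abs_of_pos hc]
      rw [lt_div_iff₀ hc] at hd'
      linarith [hd']
  · rintro x ⟨x0, hx0, rfl⟩ y ⟨y0, hy0, rfl⟩ hxy hsub
    have hx0y0 : x0 < y0 := by
      by_contra h
      push_neg at h
      have : c * y0 + d ≤ c * x0 + d := by nlinarith
      exact absurd hxy (not_lt_of_ge (le_trans (le_of_eq rfl) this))
    apply hA.nosub x0 hx0 y0 hy0 hx0y0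
    intro z hz
    have : c * z + d ∈ Set.Icc (c * x0 + d) (c * y0 + d) := by
      constructor <;> [nlinarith [hz.1]; nlinarith [hz.2]]
    obtain ⟨w, hw, hweq⟩ := hsub this
    have : w = z := aff_inj (ne_of_gt hc) hweq
    exact this ▸ hw
  · intro x y hgap
    obtain ⟨a, b, rfl, rfl, hg⟩ := isGap_aff_pos' hc hgap
    have hlen : c * b + d - (c * a + d) = c * (b - a) := by ring
    constructor
    · rw [hlen, rightTargets_aff_pos hc hA,
        sInf_aff_pos hc (rt_nonempty hA hg) rt_bddBelow]
      have := (hA.thick a b hg).1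
      nlinarith
    · rw [hlen, leftTargets_aff_pos hc hA,
        sSup_aff_pos hc (lt_nonempty hA hg) lt_bddAbove]
      have := (hA.thick a b hg).2
      nlinarith

lemma nice_neg (hA : NiceSet A) : NiceSet (Neg.neg '' A) := by
  constructor
  · exact hA.comp.image (by fun_prop)
  · exact hA.nonemp.image _
  · rintro y ⟨x, hx, rfl⟩ ε hε
    obtain ⟨y', hy', hne, hd'⟩ := hA.acc x hx ε hε
    refine ⟨-y', ⟨y', hy', rfl⟩, fun h => hne (by linarith [neg_injective h]), ?_⟩
    show |-y' - -x| < ε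
    rw [show -y' - -x = -(y' - x) by ring, abs_neg]
    exact hd'
  · rintro x ⟨x0, hx0, rfl⟩ y ⟨y0, hy0, rfl⟩ hxy hsub
    have hx0y0 : y0 < x0 := by
      show y0 < x0
      have hxy' : -x0 < -y0 := hxy
      linarith
    apply hA.nosub y0 hy0 x0 hx0 hx0y0
    intro z hz
    have : -z ∈ Set.Icc (-x0) (-y0) := ⟨by linarith [hz.2], by linarith [hz.1]⟩
    obtain ⟨w, hw, hweq⟩ := hsub this
    exact (neg_injective hweq) ▸ hw
  · intro x y hgap
    obtain ⟨a, b, rfl, rfl, hg⟩ := isGap_neg' hgap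
    have hlen : -a - -b = b - a := by ring
    constructor
    · rw [hlen, rightTargets_neg hA,
        sInf_neg_img (lt_nonempty hA hg) lt_bddAbove]
      have := (hA.thick a b hg).2
      linarith
    · rw [hlen, leftTargets_neg hA,
        sSup_neg_img (rt_nonempty hA hg) rt_bddBelow]
      have := (hA.thick a b hg).1
      linarith

end Transport
section SumSolve
set_option linter.unusedSectionVars false

lemma sum_solve {A' : Set ℝ} (hA' : NiceSet A') (hpos : 0 < sInf A')
    {αp βp u1 u2 t : ℝ} (hαp : 0 < αp) (hratio : βp ≤ 3 * αp)
    (hu1 : αp ≤ u1) (hu1' : u1 ≤ βp) (hu2 : αp ≤ u2) (hu2' : u2 ≤ βp)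
    (ht1 : u1 * sInf A' + u2 * sInf A' + βp * (sSup A' - sInf A') / 3 ≤ t)
    (ht2 : t ≤ u1 * sSup A' + u2 * sSup A' - βp * (sSup A' - sInf A') / 3) :
    ∃ y1 ∈ A', ∃ y2 ∈ A', u1 * y1 + u2 * y2 = t := by
  have hu1p : 0 < u1 := lt_of_lt_of_le hαp hu1
  have hu2p : 0 < u2 := lt_of_lt_of_le hαp hu2
  set i := sInf A' with hi
  set s := sSup A' with hs
  have his : i < s := hA'.diam_pos
  set A1 := (fun x => u1 * x + 0) '' A' with hA1def
  set B1 := (fun x => u2 * x + t) '' (Neg.neg '' A') with hB1def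
  have hA1 : NiceSet A1 := nice_aff_pos hA' hu1p
  have hB1 : NiceSet B1 := nice_aff_pos (nice_neg hA') hu2p
  have e1 : sSup A1 = u1 * s + 0 := sSup_aff_pos hu1p hA'.nonemp hA'.bddA
  have e2 : sInf A1 = u1 * i + 0 := sInf_aff_pos hu1p hA'.nonemp hA'.bddB
  have e3 : sSup B1 = u2 * (-i) + t := by
    rw [hB1def, sSup_aff_pos hu2p (hA'.nonemp.image _) (nice_neg hA').bddA,
      sSup_neg_img hA'.nonemp hA'.bddB]
  have e4 : sInf B1 = u2 * (-s) + t := by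
    rw [hB1def, sInf_aff_pos hu2p (hA'.nonemp.image _) (nice_neg hA').bddB,
      sInf_neg_img hA'.nonemp hA'.bddA]
  have hov : max (sInf A1) (sInf B1) + max (sSup A1 - sInf A1) (sSup B1 - sInf B1) / 3
      ≤ min (sSup A1) (sSup B1) := by
    rw [e1, e2, e3, e4]
    have hmd : max (u1 * s + 0 - (u1 * i + 0)) (u2 * (-i) + t - (u2 * (-s) + t))
        ≤ βp * (s - i) := by
      apply max_le <;> nlinarith
    apply le_min
    · rcases max_cases (u1 * i + 0) (u2 * (-s) + t) with ⟨hmx, -⟩ | ⟨hmx, -⟩ <;>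
        rw [hmx] <;> nlinarith
    · rcases max_cases (u1 * i + 0) (u2 * (-s) + t) with ⟨hmx, -⟩ | ⟨hmx, -⟩ <;>
        rw [hmx] <;> nlinarith
  obtain ⟨z, hz1, hz2⟩ := inter_of_overlap hA1 hB1 hov
  obtain ⟨y1, hy1, hy1e⟩ := hz1
  obtain ⟨w, ⟨y2, hy2, rfl⟩, hwe⟩ := hz2
  refine ⟨y1, hy1, y2, hy2, ?_⟩
  have h1 : u1 * y1 + 0 = z := hy1e
  have h2 : u2 * (-y2) + t = z := hwe
  linarith

end SumSolve
section Piece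
set_option linter.unusedSectionVars false
set_option maxHeartbeats 1000000

lemma targets_attained {K : Set ℝ} (hK : NiceSet K) {b m : ℝ} (hm : 0 < m) (hb : b < sSup K) :
    sInf (rightTargets K b m) ∈ rightTargets K b m := by
  set T := rightTargets K b m with hT
  have hTne : (T : Set ℝ).Nonempty := ⟨sSup K, hb, Or.inr rfl⟩
  have hTb : BddBelow T := rt_bddBelow
  set R := sInf T with hR
  by_contra hRT
  have key : ∀ x y : ℝ, R ≤ x → x < y → y < R + m →
      (∃ s, IsGap K x s ∧ m ≤ s - x) → (∃ s, IsGap K y s ∧ m ≤ s - y) → False := by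
    rintro x y hx hxy hym ⟨bx, gx, lx⟩ ⟨by', gy, ly⟩
    have hyK : y ∈ K := gy.2.1
    have : y ∉ Set.Ioo x bx := fun h => by
      have : y ∈ Set.Ioo x bx ∩ K := ⟨h, hyK⟩
      rw [gx.2.2.2] at this; exact this
    rw [Set.mem_Ioo, not_and_or] at this
    rcases this with h | h
    · exact h hxy
    · push_neg at h; linarith
  have getmem : ∀ w : ℝ, R < w → ∃ e ∈ T, e < w ∧ R < e := by
    intro w hw
    obtain ⟨e, heT, hew⟩ := exists_lt_of_csInf_lt hTne hw
    refine ⟨e, heT, hew, lt_of_le_of_ne (csInf_le hTb heT) (fun h => hRT (h ▸ heT))⟩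
  obtain ⟨e0, he0T, he0lt, he0gt⟩ := getmem (R + m) (by linarith)
  obtain ⟨e1, he1T, he1lt, he1gt⟩ := getmem e0 he0gt
  obtain ⟨e2, he2T, he2lt, he2gt⟩ := getmem e1 he1gt
  have hP0 := he0T.2
  have hP1 := he1T.2
  have hP2 := he2T.2
  rcases hP1 with hP1 | hS1
  · rcases hP2 with hP2 | hS2
    · exact key e2 e1 (le_of_lt he2gt) he2lt (by linarith) hP2 hP1
    · rcases hP0 with hP0 | hS0
      · exact key e1 e0 (le_of_lt he1gt) he1lt he0lt hP1 hP0
      · exact absurd (hS2.trans hS0.symm) (ne_of_lt (lt_trans he2lt he1lt))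
  · rcases hP2 with hP2 | hS2
    · rcases hP0 with hP0 | hS0
      · exact key e2 e0 (le_of_lt he2gt) (lt_trans he2lt he1lt) he0lt hP2 hP0
      · exact absurd (hS1.trans hS0.symm) (ne_of_lt he1lt)
    · exact absurd (hS2.trans hS1.symm) (ne_of_lt he2lt)

noncomputable def pieceR (K : Set ℝ) (b m : ℝ) : ℝ := sInf (rightTargets K b m)

lemma pieceR_lb {K : Set ℝ} (hK : NiceSet K) {a1 b1 m : ℝ}
    (hg1 : IsGap K a1 b1) (hm : 0 < m) (hm1 : m ≤ b1 - a1) :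
    b1 + m ≤ pieceR K b1 m := by
  have hb1S : b1 < sSup K := hK.gap_lt_sSup hg1
  have hRT := targets_attained hK hm hb1S
  have hRinf : pieceR K b1 m = sInf (rightTargets K b1 m) := rfl
  rw [← hRinf] at hRT
  set R := pieceR K b1 m with hRdef
  have hb1R : b1 < R := hRT.1
  have hthick1 : b1 - a1 ≤ sInf (rightTargets K b1 (b1 - a1)) - b1 := (hK.thick a1 b1 hg1).1
  rcases hRT.2 with ⟨b2, hg2, hlen2⟩ | hSup
  · rcases le_or_gt (b2 - R) (b1 - a1) with hcase | hcase
    · -- small right gap: use left-thickness at (R, b2)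
      have hth := (hK.thick R b2 hg2).2
      have hb1mem : b1 ∈ leftTargets K R (b2 - R) := ⟨hb1R, Or.inl ⟨a1, hg1, by linarith⟩⟩
      have := le_csSup (lt_bddAbove (K := K) (u := R) (ℓ := b2 - R)) hb1mem
      linarith
    · -- the gap (R,b2) is longer than (a1,b1): it is a (b1-a1)-target
      have hmem : R ∈ rightTargets K b1 (b1 - a1) := ⟨hb1R, Or.inl ⟨b2, hg2, by linarith⟩⟩
      have := csInf_le (rt_bddBelow (K := K) (u := b1) (ℓ := b1 - a1)) hmem
      linarith
  · have hmem : sSup K ∈ rightTargets K b1 (b1 - a1) := ⟨hb1S, Or.inr rfl⟩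
    have := csInf_le (rt_bddBelow (K := K) (u := b1) (ℓ := b1 - a1)) hmem
    rw [← hSup] at this
    linarith

noncomputable def piece (K : Set ℝ) (b m : ℝ) : Set ℝ := K ∩ Set.Icc b (pieceR K b m)

lemma piece_props {K : Set ℝ} (hK : NiceSet K) {a1 b1 m : ℝ}
    (hg1 : IsGap K a1 b1) (hm : 0 < m) (hm1 : m ≤ b1 - a1) :
    NiceSet (piece K b1 m) ∧ sInf (piece K b1 m) = b1 ∧
      sSup (piece K b1 m) = pieceR K b1 m ∧ b1 + m ≤ pieceR K b1 m := by
  have hb1S : b1 < sSup K := hK.gap_lt_sSup hg1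
  have hRT := targets_attained hK hm hb1S
  have hRinf : pieceR K b1 m = sInf (rightTargets K b1 m) := rfl
  rw [← hRinf] at hRT
  have hRlb := pieceR_lb hK hg1 hm hm1
  set R := pieceR K b1 m with hRdef
  have hb1R : b1 < R := hRT.1
  have hRK : R ∈ K := by
    rcases hRT.2 with ⟨b2, hg2, -⟩ | hSup
    · exact hg2.2.1
    · exact hSup ▸ hK.sSup_mem
  set P := piece K b1 m with hPdef
  have hb1P : b1 ∈ P := ⟨hg1.2.2.1, le_refl b1, le_of_lt hb1R⟩
  have hRP : R ∈ P := ⟨hRK, le_of_lt hb1R, le_refl R⟩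
  have hPsub : P ⊆ K := Set.inter_subset_left
  have hPcomp : IsCompact P := hK.comp.inter_right isClosed_Icc
  have hinf : sInf P = b1 :=
    le_antisymm (csInf_le hPcomp.bddBelow hb1P) (le_csInf ⟨b1, hb1P⟩ (fun x hx => hx.2.1))
  have hsup : sSup P = R :=
    le_antisymm (csSup_le ⟨R, hRP⟩ (fun x hx => hx.2.2)) (le_csSup hPcomp.bddAbove hRP)
  have gapchar : ∀ x y : ℝ, IsGap P x y ↔ (IsGap K x y ∧ b1 ≤ x ∧ y ≤ R) := by
    intro x y
    constructor
    · rintro ⟨h1, h2, h3, h4⟩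
      refine ⟨⟨h1, hPsub h2, hPsub h3, ?_⟩, h2.2.1, h3.2.2⟩
      ext z
      simp only [Set.mem_inter_iff, Set.mem_Ioo, Set.mem_empty_iff_false, iff_false, not_and]
      rintro ⟨hz1, hz2⟩ hzK
      have : z ∈ Set.Ioo x y ∩ P := ⟨⟨hz1, hz2⟩, hzK,
        le_trans h2.2.1 (le_of_lt hz1), le_trans (le_of_lt hz2) h3.2.2⟩
      rw [h4] at this; exact this
    · rintro ⟨⟨h1, h2, h3, h4⟩, h5, h6⟩
      refine ⟨h1, ⟨h2, h5, le_trans (le_of_lt h1) h6⟩, ⟨h3, le_trans h5 (le_of_lt h1), h6⟩, ?_⟩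
      ext z
      simp only [Set.mem_inter_iff, Set.mem_Ioo, Set.mem_empty_iff_false, iff_false, not_and]
      rintro ⟨hz1, hz2⟩ hzP
      have : z ∈ Set.Ioo x y ∩ K := ⟨⟨hz1, hz2⟩, hPsub hzP⟩
      rw [h4] at this; exact this
  have gapsmall : ∀ x y : ℝ, IsGap P x y → y - x < m ∧ b1 < x ∧ y < R := by
    intro x y hgp
    obtain ⟨hgK, hbx, hyR⟩ := (gapchar x y).mp hgp
    have hbx' : b1 < x := by
      rcases lt_or_eq_of_le hbx with h | h
      · exact h
      · exact absurd (h ▸ hgK) (fun hh => hK.no_adjacent hg1 hh)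
    have hyR' : y < R := by
      rcases lt_or_eq_of_le hyR with h | h
      · exact h
      · exfalso
        rcases hRT.2 with ⟨b2, hg2, -⟩ | hSup
        · rw [← h] at hg2
          obtain ⟨y', hy'K, hy'ne, hy'd⟩ := hK.acc y hgK.2.2.1
            (min (y - x) (b2 - y)) (lt_min (by linarith [hgK.1]) (by linarith [hg2.1]))
          rw [abs_lt] at hy'd
          have d1 : min (y-x) (b2-y) ≤ y - x := min_le_left _ _
          have d2 : min (y-x) (b2-y) ≤ b2 - y := min_le_right _ _
          rcases lt_or_gt_of_ne hy'ne with hcmp | hcmp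
          · have : y' ∈ Set.Ioo x y ∩ K := ⟨⟨by linarith [hy'd.1], hcmp⟩, hy'K⟩
            rw [hgK.2.2.2] at this; exact this
          · have : y' ∈ Set.Ioo y b2 ∩ K := ⟨⟨hcmp, by linarith [hy'd.2]⟩, hy'K⟩
            rw [hg2.2.2.2] at this; exact this
        · have hSup' : y = sSup K := h.trans hSup
          obtain ⟨y', hy'K, hy'ne, hy'd⟩ := hK.acc y hgK.2.2.1 (y - x) (by linarith [hgK.1])
          rw [abs_lt] at hy'd
          have hle : y' ≤ y := hSup' ▸ hK.le_sSup' hy'K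
          have : y' ∈ Set.Ioo x y ∩ K := ⟨⟨by linarith [hy'd.1], lt_of_le_of_ne hle hy'ne⟩, hy'K⟩
          rw [hgK.2.2.2] at this; exact this
    refine ⟨?_, hbx', hyR'⟩
    by_contra hlen
    push_neg at hlen
    have : x ∈ rightTargets K b1 m := ⟨hbx', Or.inl ⟨y, hgK, hlen⟩⟩
    have := csInf_le (rt_bddBelow (K := K) (u := b1) (ℓ := m)) this
    rw [← hRinf] at this
    linarith [hgK.1]
  have hRmemT : ∀ {y ℓ : ℝ}, y < R → ℓ < m → R ∈ rightTargets K y ℓ := by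
    intro y ℓ hyR hℓ
    refine ⟨hyR, ?_⟩
    rcases hRT.2 with ⟨b2, hg2, hl2⟩ | hSup
    · exact Or.inl ⟨b2, hg2, by linarith⟩
    · exact Or.inr hSup
  have hnice : NiceSet P := by
    constructor
    · exact hPcomp
    · exact ⟨b1, hb1P⟩
    · -- acc
      rintro x ⟨hxK, hxl, hxr⟩ ε hε
      rcases eq_or_lt_of_le hxl with hxb | hxb
      · -- x = b1
        obtain ⟨y, hyK, hyne, hyd⟩ := hK.acc x hxK (min ε (min (b1 - a1) (R - b1)))
          (lt_min hε (lt_min (by linarith [hg1.1]) (by linarith)))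
        rw [abs_lt] at hyd
        have d1 : min ε (min (b1-a1) (R-b1)) ≤ ε := min_le_left _ _
        have d2 : min ε (min (b1-a1) (R-b1)) ≤ b1 - a1 := le_trans (min_le_right _ _) (min_le_left _ _)
        have d3 : min ε (min (b1-a1) (R-b1)) ≤ R - b1 := le_trans (min_le_right _ _) (min_le_right _ _)
        have hyb1 : b1 ≤ y := by
          by_contra h
          push_neg at h
          have : y ∈ Set.Ioo a1 b1 ∩ K := ⟨⟨by linarith [hyd.1, hxb], by linarith [hxb]⟩, hyK⟩
          rw [hg1.2.2.2] at this; exact this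
        refine ⟨y, ⟨hyK, hyb1, by linarith [hyd.2, hxb]⟩, hyne, by rw [abs_lt]; exact ⟨by linarith [hyd.1], by linarith [hyd.2]⟩⟩
      · rcases eq_or_lt_of_le hxr with hxR | hxR
        · -- x = R
          have hxR' : x = R := hxR
          rcases hRT.2 with ⟨b2, hg2, -⟩ | hSup
          · obtain ⟨y, hyK, hyne, hyd⟩ := hK.acc x hxK (min ε (min (x - b1) (b2 - R)))
              (lt_min hε (lt_min (by linarith) (by linarith [hg2.1, hxR'])))
            rw [abs_lt] at hyd
            have d1 : min ε (min (x-b1) (b2-R)) ≤ ε := min_le_left _ _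
            have d2 : min ε (min (x-b1) (b2-R)) ≤ x - b1 := le_trans (min_le_right _ _) (min_le_left _ _)
            have d3 : min ε (min (x-b1) (b2-R)) ≤ b2 - R := le_trans (min_le_right _ _) (min_le_right _ _)
            have hyR : y ≤ R := by
              by_contra h
              push_neg at h
              have : y ∈ Set.Ioo R b2 ∩ K := ⟨⟨h, by linarith [hyd.2, hxR']⟩, hyK⟩
              rw [hg2.2.2.2] at this; exact this
            refine ⟨y, ⟨hyK, by linarith [hyd.1], hyR⟩, hyne, by rw [abs_lt]; exact ⟨by linarith [hyd.1], by linarith [hyd.2]⟩⟩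
          · obtain ⟨y, hyK, hyne, hyd⟩ := hK.acc x hxK (min ε (x - b1))
              (lt_min hε (by linarith))
            rw [abs_lt] at hyd
            have d1 : min ε (x-b1) ≤ ε := min_le_left _ _
            have d2 : min ε (x-b1) ≤ x - b1 := min_le_right _ _
            have hyR : y ≤ R := by rw [hSup]; exact hK.le_sSup' hyK
            refine ⟨y, ⟨hyK, by linarith [hyd.1], hyR⟩, hyne, by rw [abs_lt]; exact ⟨by linarith [hyd.1], by linarith [hyd.2]⟩⟩
        · -- interior
          obtain ⟨y, hyK, hyne, hyd⟩ := hK.acc x hxK (min ε (min (x - b1) (R - x)))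
            (lt_min hε (lt_min (by linarith) (by linarith)))
          rw [abs_lt] at hyd
          have d1 : min ε (min (x-b1) (R-x)) ≤ ε := min_le_left _ _
          have d2 : min ε (min (x-b1) (R-x)) ≤ x - b1 := le_trans (min_le_right _ _) (min_le_left _ _)
          have d3 : min ε (min (x-b1) (R-x)) ≤ R - x := le_trans (min_le_right _ _) (min_le_right _ _)
          refine ⟨y, ⟨hyK, by linarith [hyd.1], by linarith [hyd.2]⟩, hyne, by rw [abs_lt]; exact ⟨by linarith [hyd.1], by linarith [hyd.2]⟩⟩
    · -- nosub
      intro x hx y hy hxy hsub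
      exact hK.nosub x (hPsub hx) y (hPsub hy) hxy (fun z hz => hPsub (hsub hz))
    · -- thick
      intro x y hgp
      obtain ⟨hlen, hbx, hyR⟩ := gapsmall x y hgp
      obtain ⟨hgK, -, -⟩ := (gapchar x y).mp hgp
      constructor
      · have hsubT : rightTargets P y (y - x) ⊆ rightTargets K y (y - x) := by
          rintro e ⟨he1, hd'⟩
          refine ⟨he1, ?_⟩
          rcases hd' with ⟨s, hgs, hls⟩ | hsupe
          · exact Or.inl ⟨s, ((gapchar e s).mp hgs).1, hls⟩
          · rw [hsup] at hsupe
            subst hsupe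
            exact (hRmemT hyR hlen).2
        have hTpne : (rightTargets P y (y - x)).Nonempty := ⟨R, hyR, Or.inr hsup.symm⟩
        have := csInf_le_csInf (rt_bddBelow (K := K) (u := y) (ℓ := y - x)) hTpne hsubT
        have h2 := (hK.thick x y hgK).1
        linarith
      · have hsubT : leftTargets P x (y - x) ⊆ leftTargets K x (y - x) := by
          rintro e ⟨he1, hd'⟩
          refine ⟨he1, ?_⟩
          rcases hd' with ⟨s, hgs, hls⟩ | hinfe
          · exact Or.inl ⟨s, ((gapchar s e).mp hgs).1, hls⟩
          · rw [hinf] at hinfe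
            subst hinfe
            exact Or.inl ⟨a1, hg1, by linarith⟩
        have hTpne : (leftTargets P x (y - x)).Nonempty := ⟨b1, hbx, Or.inr hinf.symm⟩
        have := csSup_le_csSup (lt_bddAbove (K := K) (u := x) (ℓ := y - x)) hTpne hsubT
        have h2 := (hK.thick x y hgK).2
        linarith
  exact ⟨hnice, hinf, hsup, hRlb⟩

end Piece
section Levels
set_option linter.unusedSectionVars false
set_option maxHeartbeats 1000000

lemma levels {K : Set ℝ} (hK : NiceSet K) {a1 b1 : ℝ} (hg1 : IsGap K a1 b1)
    (hb1 : 0 < b1) (k : ℕ) :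
    ∃ (A : ℕ → Set ℝ) (lo hi : ℕ → ℝ),
      (∀ d, A d ⊆ K) ∧
      (∀ d, (A d).Nonempty) ∧
      (∀ d, d < k → lo d < hi d) ∧
      (∀ d, d < k → ∀ u1 u2, u1 ∈ A d → u2 ∈ A d → ∀ t, lo d ≤ t → t ≤ hi d →
         ∃ y1 ∈ A (d+1), ∃ y2 ∈ A (d+1), u1 * y1 + u2 * y2 = t) := by
  set δ' := min (b1/4) (b1 - a1) with hδ'
  have hδ'pos : 0 < δ' := lt_min (by linarith) (by linarith [hg1.1])
  have hδ'le : δ' ≤ b1 - a1 := min_le_right _ _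
  have hδ'le2 : δ' ≤ b1/4 := min_le_left _ _
  -- gap ladder
  set Inv : ℝ × ℝ → Prop :=
    fun g => IsGap K g.1 g.2 ∧ b1 < g.1 ∧ g.1 < g.2 ∧ g.2 ≤ b1 + δ' with hInv
  have base : ∃ g : ℝ × ℝ, Inv g := by
    obtain ⟨x, y, hg, h1, h2, h3⟩ := hK.exists_gap_small hg1 hδ'pos
    exact ⟨(x, y), hg, h1, h2, h3⟩
  have step : ∀ g : ℝ × ℝ, Inv g → ∃ g' : ℝ × ℝ, Inv g' ∧ g'.2 ≤ b1 + (g.2 - g.1)/2 := by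
    rintro ⟨x, y⟩ ⟨hg, h1, h2, h3⟩
    have h1' : b1 < x := h1
    have h2' : x < y := h2
    have h3' : y ≤ b1 + δ' := h3
    obtain ⟨x'', y'', hg'', k1, k2, k3⟩ := hK.exists_gap_small hg1
      (show (0:ℝ) < (y - x)/2 by linarith)
    have hlen : y - x ≤ δ' := by linarith
    refine ⟨(x'', y''), ⟨hg'', k1, k2, ?_⟩, ?_⟩
    · show y'' ≤ b1 + δ'
      linarith
    · show y'' ≤ b1 + ((x, y).2 - (x, y).1)/2
      simp only
      linarith
  let F : ℕ → {g : ℝ × ℝ // Inv g} := fun n =>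
    Nat.rec ⟨base.choose, base.choose_spec⟩
      (fun _ p => ⟨(step p.1 p.2).choose, (step p.1 p.2).choose_spec.1⟩) n
  have hchainF : ∀ j, (F (j+1)).1.2 ≤ b1 + ((F j).1.2 - (F j).1.1)/2 := by
    intro j
    exact (step (F j).1 (F j).2).choose_spec.2
  set m : ℕ → ℝ := fun j => (F j).1.2 - (F j).1.1 with hm
  have hmpos : ∀ j, 0 < m j := fun j => by
    have := (F j).2.2.2.1; simp only [hm]; linarith
  have hmle : ∀ j, m j ≤ δ' := fun j => by
    have h1 := (F j).2.2.1
    have h2 := (F j).2.2.2.2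
    simp only [hm]; linarith
  have hmle1 : ∀ j, m j ≤ b1 - a1 := fun j => le_trans (hmle j) hδ'le
  -- pieces
  set R : ℕ → ℝ := fun j => pieceR K b1 (m j) with hR
  set P : ℕ → Set ℝ := fun j => piece K b1 (m j) with hP
  have hprops : ∀ j, NiceSet (P j) ∧ sInf (P j) = b1 ∧ sSup (P j) = R j ∧ b1 + m j ≤ R j :=
    fun j => piece_props hK hg1 (hmpos j) (hmle1 j)
  have hRx : ∀ j, R j ≤ (F j).1.1 := by
    intro j
    apply csInf_le rt_bddBelow
    exact ⟨(F j).2.2.1, Or.inl ⟨(F j).1.2, (F j).2.1, le_refl _⟩⟩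
  have hRub : ∀ j, R j ≤ b1 + δ' := by
    intro j
    refine le_trans (hRx j) ?_
    have h2 := (F j).2.2.2.1
    have h3 := (F j).2.2.2.2
    linarith
  have hRchain : ∀ j, R (j+1) ≤ b1 + (m j)/2 := by
    intro j
    refine le_trans (hRx (j+1)) (le_trans ?_ (hchainF j))
    exact le_of_lt (F (j+1)).2.2.2.1
  have hPsubIcc : ∀ j, P j ⊆ Set.Icc b1 (R j) := fun j => Set.inter_subset_right
  have hPsubK : ∀ j, P j ⊆ K := fun j => Set.inter_subset_left
  have hb1mem : ∀ j, b1 ∈ P j := by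
    intro j
    refine ⟨hg1.2.2.1, le_refl b1, ?_⟩
    have := (hprops j).2.2.2
    have := hmpos j
    show b1 ≤ pieceR K b1 (m j)
    linarith
  clear_value F m R P
  clear hchainF hRx hInv base step hm hR hP
  -- windows, indexed by level d; level d uses pin piece P (k-d), child piece P (k-d-1)
  refine ⟨fun d => P (k - d), fun d => 2 * R (k - d) * b1 + R (k - d) * (R (k - d - 1) - b1) / 3,
    fun d => 2 * b1 * R (k - d - 1) - R (k - d) * (R (k - d - 1) - b1) / 3, ?_, ?_, ?_, ?_⟩
  · intro d
    exact hPsubK (k - d)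
  · intro d
    exact ⟨b1, hb1mem (k - d)⟩
  · intro d hd
    show 2 * R (k - d) * b1 + R (k - d) * (R (k - d - 1) - b1) / 3 <
      2 * b1 * R (k - d - 1) - R (k - d) * (R (k - d - 1) - b1) / 3
    obtain ⟨j, hj1, hj2⟩ : ∃ j, k - d - 1 = j ∧ k - d = j + 1 := ⟨k - d - 1, rfl, by omega⟩
    rw [hj1, hj2]
    have h1 := hRchain j
    have h2 := (hprops j).2.2.2
    have h3 := hRub (j+1)
    have h4 := hmpos j
    have h5 : m j ≤ R j - b1 := by linarith
    have h6 : R (j+1) - b1 ≤ (R j - b1)/2 := by linarith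
    have h7 : R (j+1) ≤ (5/4) * b1 := by linarith
    have h8 : 0 < R j - b1 := by linarith
    have t1 : R (j+1) * (R j - b1) ≤ (5/4) * b1 * (R j - b1) :=
      mul_le_mul_of_nonneg_right h7 h8.le
    have t2 : b1 * (R (j+1) - b1) ≤ b1 * ((R j - b1)/2) :=
      mul_le_mul_of_nonneg_left h6 hb1.le
    have t3 : 0 < b1 * (R j - b1) := mul_pos hb1 h8
    nlinarith [t1, t2, t3]
  · intro d hd u1 u2 hu1 hu2 t ht1 ht2
    have hje2 : k - (d+1) = k - d - 1 := by omega
    show ∃ y1 ∈ P (k - (d+1)), ∃ y2 ∈ P (k - (d+1)), u1 * y1 + u2 * y2 = t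
    have hu1' : u1 ∈ Set.Icc b1 (R (k - d)) := hPsubIcc (k - d) hu1
    have hu2' : u2 ∈ Set.Icc b1 (R (k - d)) := hPsubIcc (k - d) hu2
    have ht1' : 2 * R (k - d) * b1 + R (k - d) * (R (k - d - 1) - b1) / 3 ≤ t := ht1
    have ht2' : t ≤ 2 * b1 * R (k - d - 1) - R (k - d) * (R (k - d - 1) - b1) / 3 := ht2
    clear ht1 ht2
    rw [hje2]
    obtain ⟨j, hj1, hj2⟩ : ∃ j, k - d - 1 = j ∧ k - d = j + 1 := ⟨k - d - 1, rfl, by omega⟩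
    rw [hj1]
    rw [hj1] at ht1' ht2'
    rw [hj2] at hu1' hu2' ht1' ht2'
    have ht1 := ht1'
    have ht2 := ht2'
    have hnice := (hprops j).1
    have hinfj := (hprops j).2.1
    have hsupj := (hprops j).2.2.1
    have hRj0 : (0:ℝ) ≤ R j := by
      have := (hprops j).2.2.2
      have := hmpos j
      linarith
    obtain ⟨y1, hy1, y2, hy2, hsum⟩ := sum_solve (u1 := u1) (u2 := u2) (t := t) hnice (by rw [hinfj]; exact hb1)
      (hb1) (show R (j+1) ≤ 3 * b1 by have := hRub (j+1); linarith)
      hu1'.1 hu1'.2 hu2'.1 hu2'.2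
      (by rw [hinfj, hsupj]
          linarith [mul_le_mul_of_nonneg_right hu1'.2 hb1.le,
            mul_le_mul_of_nonneg_right hu2'.2 hb1.le, ht1])
      (by rw [hinfj, hsupj]
          linarith [mul_le_mul_of_nonneg_right hu1'.1 hRj0,
            mul_le_mul_of_nonneg_right hu2'.1 hRj0, ht2])
    exact ⟨y1, hy1, y2, hy2, hsum⟩

end Levels
section Tree
set_option linter.unusedSectionVars false
set_option maxHeartbeats 1600000

open SimpleGraph in
lemma isPath_concat' {V : Type*} {G : SimpleGraph V} {u v w : V} {p : G.Walk u v}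
    (hp : p.IsPath) (hw : w ∉ p.support) (h : G.Adj v w) : (p.concat h).IsPath := by
  rw [← SimpleGraph.Walk.isPath_reverse_iff, SimpleGraph.Walk.reverse_concat]
  refine SimpleGraph.Walk.IsPath.cons hp.reverse ?_
  rwa [SimpleGraph.Walk.support_reverse, List.mem_reverse]

open SimpleGraph in
lemma walk_len_zero_eq {V : Type*} {G : SimpleGraph V} {u v : V} (p : G.Walk u v)
    (h : p.length = 0) : u = v := by
  cases p with
  | nil => rfl
  | cons h' q => simp [SimpleGraph.Walk.length_cons] at h

open SimpleGraph in
lemma main_construction {K : Set ℝ} (hK : NiceSet K) {a1 b1 : ℝ}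
    (hg1 : IsGap K a1 b1) (hb1 : 0 < b1)
    (k : ℕ) (G : SimpleGraph (Fin (k + 1))) (hT : G.IsTree) :
    (interior {f : G.edgeSet → ℝ |
      ∃ x : Fin (k + 1) → ℝ × ℝ, (∀ i, x i ∈ K ×ˢ K) ∧
        ∀ i j, (h : G.Adj i j) →
          f ⟨s(i, j), G.mem_edgeSet.mpr h⟩ =
            (x i).1 * (x j).1 + (x i).2 * (x j).2}).Nonempty := by
  classical
  obtain ⟨A, lo, hi, hAK, hAne, hwin, hsolv⟩ := levels hK hg1 hb1 k
  set r : Fin (k + 1) := 0 with hr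
  have hconn : G.Connected := hT.isConnected
  have hdle : ∀ i, G.dist r i ≤ k := by
    intro i
    obtain ⟨p⟩ := hconn.preconnected r i
    have h2 := (p.bypass_isPath).length_lt
    have h3 := SimpleGraph.dist_le p.bypass
    rw [Fintype.card_fin] at h2
    omega
  have hdr : G.dist r r = 0 := SimpleGraph.dist_self
  have hne_of_dstpos : ∀ i, G.dist r i ≠ 0 → i ≠ r := by
    intro i h hir
    rw [hir] at h; exact h hdr
  have hd0r : ∀ i : Fin (k+1), i ≠ r → G.dist r i ≠ 0 := by
    intro i hir h
    exact hir (hconn.dist_eq_zero_iff.mp h).symm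
  have hpar : ∀ i : Fin (k + 1), i ≠ r → ∃ j, G.Adj j i ∧ G.dist r j + 1 = G.dist r i := by
    intro i hir
    obtain ⟨p, hp⟩ := (hconn.preconnected r i).exists_walk_length_eq_dist
    obtain ⟨w, hadj, q, hq⟩ := SimpleGraph.Walk.exists_eq_cons_of_ne (Ne.symm hir).symm p.reverse
    refine ⟨w, hadj.symm, ?_⟩
    have hql : q.length + 1 = G.dist r i := by
      have := congrArg SimpleGraph.Walk.length hq
      rw [SimpleGraph.Walk.length_reverse, SimpleGraph.Walk.length_cons] at this
      omega
    have h1 : G.dist r w ≤ q.length := by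
      have := SimpleGraph.dist_le q.reverse
      rwa [SimpleGraph.Walk.length_reverse] at this
    have h2 : G.dist r i ≤ G.dist r w + 1 := by
      have ht := hconn.dist_triangle (u := r) (v := w) (w := i)
      have h3 : G.dist w i ≤ 1 := by
        have := SimpleGraph.dist_le (hadj.symm.toWalk)
        simpa using this
      omega
    omega
  have spath : ∀ i : Fin (k+1), ∃ p : G.Walk r i, p.IsPath ∧ p.length = G.dist r i := by
    intro i
    obtain ⟨p, hp⟩ := (hconn.preconnected r i).exists_walk_length_eq_dist
    refine ⟨p.bypass, p.bypass_isPath, ?_⟩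
    have h1 := SimpleGraph.Walk.length_bypass_le p
    have h2 := SimpleGraph.dist_le p.bypass
    omega
  have huniq : ∀ i j j' : Fin (k + 1), G.Adj j i → G.dist r j + 1 = G.dist r i →
      G.Adj j' i → G.dist r j' + 1 = G.dist r i → j = j' := by
    intro i j j' hadj hd hadj' hd'
    obtain ⟨p, hpP, hpl⟩ := spath j
    obtain ⟨p', hpP', hpl'⟩ := spath j'
    have hino : ∀ (q : G.Walk r j), q.IsPath → q.length = G.dist r j → i ∉ q.support := by
      intro q hq hql hmem
      have h1 := SimpleGraph.dist_le (q.takeUntil i hmem)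
      have h2 := SimpleGraph.Walk.length_takeUntil_le q hmem
      omega
    have hP1 : (p.concat hadj).IsPath := isPath_concat' hpP (hino p hpP hpl) hadj
    have hino' : ∀ (q : G.Walk r j'), q.IsPath → q.length = G.dist r j' → i ∉ q.support := by
      intro q hq hql hmem
      have h1 := SimpleGraph.dist_le (q.takeUntil i hmem)
      have h2 := SimpleGraph.Walk.length_takeUntil_le q hmem
      omega
    have hP2 : (p'.concat hadj').IsPath := isPath_concat' hpP' (hino' p' hpP' hpl') hadj'
    obtain ⟨P, -, hU⟩ := hT.existsUnique_path r i
    have heq : p.concat hadj = p'.concat hadj' := (hU _ hP1).trans (hU _ hP2).symm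
    obtain ⟨hv, -⟩ := SimpleGraph.Walk.concat_inj heq
    exact hv
  have hadjd : ∀ i j : Fin (k + 1), G.Adj i j → G.dist r j = G.dist r i + 1 ∨ G.dist r i = G.dist r j + 1 := by
    have key : ∀ i j : Fin (k+1), G.Adj i j → G.dist r i ≠ G.dist r j := by
      intro i j hadj heq
      obtain ⟨pi, hpiP, hpil⟩ := spath i
      obtain ⟨pj, hpjP, hpjl⟩ := spath j
      have hjno : j ∉ pi.support := by
        intro hmem
        have hsp := SimpleGraph.Walk.take_spec pi hmem
        have hlen := congrArg SimpleGraph.Walk.length hsp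
        rw [SimpleGraph.Walk.length_append] at hlen
        have hdrop : (pi.dropUntil j hmem).length ≠ 0 := by
          intro h0
          exact hadj.ne (walk_len_zero_eq _ h0).symm
        have h1 := SimpleGraph.dist_le (pi.takeUntil j hmem)
        omega
      have hP2 : (pi.concat hadj).IsPath := isPath_concat' hpiP hjno hadj
      obtain ⟨P, -, hU⟩ := hT.existsUnique_path r j
      have heq2 : pj = pi.concat hadj := (hU _ hpjP).trans (hU _ hP2).symm
      have := congrArg SimpleGraph.Walk.length heq2
      rw [SimpleGraph.Walk.length_concat] at this
      omega
    intro i j hadj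
    have h1 : G.dist i j ≤ 1 := by
      have := SimpleGraph.dist_le hadj.toWalk
      simpa using this
    have h2 := hconn.dist_triangle (u := r) (v := i) (w := j)
    have h3 := hconn.dist_triangle (u := r) (v := j) (w := i)
    have h4 : G.dist j i ≤ 1 := by
      have := SimpleGraph.dist_le hadj.symm.toWalk
      simpa using this
    have h5 := key i j hadj
    omega
  -- parent function
  set pfun : Fin (k + 1) → Fin (k + 1) :=
    fun i => if h : i = r then r else (hpar i h).choose with hpfun
  have hpadj : ∀ i, i ≠ r → G.Adj (pfun i) i := by
    intro i h
    simp only [hpfun, dif_neg h]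
    exact (hpar i h).choose_spec.1
  have hpd : ∀ i, i ≠ r → G.dist r (pfun i) + 1 = G.dist r i := by
    intro i h
    simp only [hpfun, dif_neg h]
    exact (hpar i h).choose_spec.2
  -- edge depth
  haveI : Finite ↥G.edgeSet := Set.Finite.to_subtype (Set.toFinite _)
  set edepth : G.edgeSet → ℕ :=
    fun e => Sym2.lift ⟨fun i j => min (G.dist r i) (G.dist r j), fun i j => min_comm _ _⟩ e.1 with hedepth
  have hdepth : ∀ e : G.edgeSet, edepth e < k := by
    rintro ⟨e, he⟩
    induction e using Sym2.ind with
    | _ i j =>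
      have hadj : G.Adj i j := G.mem_edgeSet.mp he
      have h1 := hdle i
      have h2 := hdle j
      have h3 : edepth ⟨s(i, j), he⟩ = min (G.dist r i) (G.dist r j) := rfl
      rw [h3]
      rcases hadjd i j hadj with h | h <;> omega
  set box : Set (G.edgeSet → ℝ) :=
    Set.univ.pi (fun e => Set.Ioo (lo (edepth e)) (hi (edepth e))) with hbox
  have hbox_open : IsOpen box := isOpen_set_pi Set.finite_univ (fun e _ => isOpen_Ioo)
  have hbox_ne : box.Nonempty := by
    refine ⟨fun e => (lo (edepth e) + hi (edepth e)) / 2, ?_⟩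
    intro e _
    have := hwin (edepth e) (hdepth e)
    exact ⟨by linarith, by linarith⟩
  -- solver
  have hsolv' : ∀ (d : ℕ) (u : ℝ × ℝ) (t : ℝ), ∃ y : ℝ × ℝ,
      d < k → u.1 ∈ A d → u.2 ∈ A d → lo d < t → t < hi d →
      (y.1 ∈ A (d + 1) ∧ y.2 ∈ A (d + 1) ∧ u.1 * y.1 + u.2 * y.2 = t) := by
    intro d u t
    by_cases hc : d < k ∧ u.1 ∈ A d ∧ u.2 ∈ A d ∧ lo d < t ∧ t < hi d
    · obtain ⟨y1, hy1, y2, hy2, hs⟩ := hsolv d hc.1 u.1 u.2 hc.2.1 hc.2.2.1 t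
        (le_of_lt hc.2.2.2.1) (le_of_lt hc.2.2.2.2)
      exact ⟨(y1, y2), fun _ _ _ _ _ => ⟨hy1, hy2, hs⟩⟩
    · exact ⟨(0, 0), fun h1 h2 h3 h4 h5 => absurd ⟨h1, h2, h3, h4, h5⟩ hc⟩
  choose sol hsol using hsolv'
  obtain ⟨q0, hq0⟩ := hAne 0
  -- show box is inside the set
  obtain ⟨f0, hf0⟩ := hbox_ne
  refine ⟨f0, interior_maximal ?_ hbox_open hf0⟩
  intro f hf
  have hfmem : ∀ e : G.edgeSet, lo (edepth e) < f e ∧ f e < hi (edepth e) := by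
    intro e
    have := hf e (Set.mem_univ e)
    exact ⟨this.1, this.2⟩
  have build : ∀ n : ℕ, ∃ x : Fin (k + 1) → ℝ × ℝ,
      (∀ i, G.dist r i ≤ n → (x i).1 ∈ A (G.dist r i) ∧ (x i).2 ∈ A (G.dist r i)) ∧
      (∀ i, G.dist r i ≤ n → ∀ (h0 : i ≠ r),
        (x (pfun i)).1 * (x i).1 + (x (pfun i)).2 * (x i).2
          = f ⟨s(pfun i, i), G.mem_edgeSet.mpr (hpadj i h0)⟩) := by
    intro n
    induction n with
    | zero =>
      refine ⟨fun _ => (q0, q0), ?_, ?_⟩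
      · intro i hi0
        have : G.dist r i = 0 := by omega
        rw [this]
        exact ⟨hq0, hq0⟩
      · intro i hi0 h0
        exact absurd (by omega : G.dist r i = 0) (hd0r i h0)
    | succ n IH =>
      obtain ⟨x, hx1, hx2⟩ := IH
      set x' : Fin (k + 1) → ℝ × ℝ := fun i =>
        if h : G.dist r i = n + 1 then
          sol n (x (pfun i))
            (f ⟨s(pfun i, i), G.mem_edgeSet.mpr (hpadj i (hne_of_dstpos i (by omega)))⟩)
        else x i with hx'
      have hx'eq : ∀ i, G.dist r i ≤ n → x' i = x i := by
        intro i h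
        simp only [hx']
        rw [dif_neg (by omega)]
      have hx'p : ∀ i, G.dist r i = n + 1 → x' (pfun i) = x (pfun i) := by
        intro i h
        have hir : i ≠ r := hne_of_dstpos i (by omega)
        have := hpd i hir
        exact hx'eq (pfun i) (by omega)
      have hkey : ∀ i, (h : G.dist r i = n + 1) →
          (x' i).1 ∈ A (n + 1) ∧ (x' i).2 ∈ A (n + 1) ∧
          (x (pfun i)).1 * (x' i).1 + (x (pfun i)).2 * (x' i).2
            = f ⟨s(pfun i, i), G.mem_edgeSet.mpr (hpadj i (hne_of_dstpos i (by omega)))⟩ := by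
        intro i h
        have hir : i ≠ r := hne_of_dstpos i (by omega)
        have hpdi := hpd i hir
        have hmem := hx1 (pfun i) (by omega)
        have hdn : G.dist r (pfun i) = n := by omega
        rw [hdn] at hmem
        set e : G.edgeSet := ⟨s(pfun i, i), G.mem_edgeSet.mpr (hpadj i (hne_of_dstpos i (by omega)))⟩ with he
        have hde : edepth e = n := by
          have h3 : edepth e = min (G.dist r (pfun i)) (G.dist r i) := rfl
          rw [h3, hdn, h]
          omega
        have hfm := hfmem e
        rw [hde] at hfm
        have hx'i : x' i = sol n (x (pfun i)) (f e) := by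
          simp only [hx']
          rw [dif_pos h]
        have := hsol n (x (pfun i)) (f e) (by have hh := hdle i; rw [h] at hh; omega) hmem.1 hmem.2 hfm.1 hfm.2
        rw [hx'i]
        exact ⟨this.1, this.2.1, this.2.2⟩
      refine ⟨x', ?_, ?_⟩
      · intro i hdi
        rcases Nat.lt_or_ge (G.dist r i) (n + 1) with hlt | hge
        · rw [hx'eq i (by omega)]
          exact hx1 i (by omega)
        · have h : G.dist r i = n + 1 := by omega
          have := hkey i h
          rw [h]
          exact ⟨this.1, this.2.1⟩
      · intro i hdi h0
        rcases Nat.lt_or_ge (G.dist r i) (n + 1) with hlt | hge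
        · have hpl : G.dist r (pfun i) ≤ n := by
            have := hpd i h0
            omega
          rw [hx'eq i (by omega), hx'eq (pfun i) hpl]
          exact hx2 i (by omega) h0
        · have h : G.dist r i = n + 1 := by omega
          rw [hx'p i h]
          exact (hkey i h).2.2
  obtain ⟨x, hx1, hx2⟩ := build k
  refine ⟨x, ?_, ?_⟩
  · intro i
    have := hx1 i (hdle i)
    exact Set.mem_prod.mpr ⟨hAK _ this.1, hAK _ this.2⟩
  · intro i j hadj
    rcases hadjd i j hadj with hd | hd
    · have hjr : j ≠ r := hne_of_dstpos j (by omega)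
      have hieq : i = pfun j := huniq j i (pfun j) hadj (by omega) (hpadj j hjr) (hpd j hjr)
      subst hieq
      have h2 := hx2 j (hdle j) hjr
      exact h2.symm
    · have hir : i ≠ r := hne_of_dstpos i (by omega)
      have hjeq : j = pfun i := huniq i j (pfun i) hadj.symm (by omega) (hpadj i hir) (hpd i hir)
      subst hjeq
      have h2 := hx2 i (hdle i) hir
      have hsym : (⟨s(i, pfun i), G.mem_edgeSet.mpr hadj⟩ : G.edgeSet)
          = ⟨s(pfun i, i), G.mem_edgeSet.mpr (hpadj i hir)⟩ := Subtype.ext (Sym2.eq_swap)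
      rw [hsym]
      rw [← h2]
      ring

end Tree
section Final
set_option linter.unusedSectionVars false
set_option maxHeartbeats 1600000

theorem tree_dot_interior (K : Set ℝ) (hK : IsCantorSet K) (hτ : 1 ≤ thickness K)
    (k : ℕ) (G : SimpleGraph (Fin (k + 1))) (hT : G.IsTree) :
    (interior {f : G.edgeSet → ℝ |
      ∃ x : Fin (k + 1) → ℝ × ℝ, (∀ i, x i ∈ K ×ˢ K) ∧
        ∀ i j, (h : G.Adj i j) →
          f ⟨s(i, j), G.mem_edgeSet.mpr h⟩ =
            (x i).1 * (x j).1 + (x i).2 * (x j).2}).Nonempty := by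
  obtain ⟨hne, hcomp, hperf, htd⟩ := hK
  have hvals : ∀ rr ∈ thicknessValues K, (1:ℝ) ≤ rr := by
    intro rr hrr
    by_cases hbdd : BddBelow (thicknessValues K)
    · exact le_trans hτ (csInf_le hbdd hrr)
    · rw [thickness, Real.sInf_of_not_bddBelow hbdd] at hτ; linarith
  have hnice : NiceSet K := by
    constructor
    · exact hcomp
    · exact hne
    · intro x hx ε hε
      have := accPt_iff_nhds.mp (hperf.acc x hx) (Metric.ball x ε)
        (Metric.ball_mem_nhds x hε)
      obtain ⟨y, ⟨hyb, hyK⟩, hyne⟩ := this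
      refine ⟨y, hyK, hyne, ?_⟩
      rw [Metric.mem_ball, Real.dist_eq] at hyb
      exact hyb
    · intro x hx y hy hxy hsub
      have hss := htd _ hsub isPreconnected_Icc
      exact absurd (hss (Set.left_mem_Icc.mpr (le_of_lt hxy))
        (Set.right_mem_Icc.mpr (le_of_lt hxy))) (ne_of_lt hxy)
    · intro a b hg
      have h1 := hvals _ ⟨a, b, hg, Or.inl rfl⟩
      have h2 := hvals _ ⟨a, b, hg, Or.inr rfl⟩
      have hba : (0:ℝ) < b - a := by linarith [hg.1]
      constructor
      · rw [le_div_iff₀ hba] at h1; linarith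
      · rw [le_div_iff₀ hba] at h2; linarith
  have hfind : ∀ (L : Set ℝ), NiceSet L → ∀ p ∈ L, 0 < p →
      ∃ a1 b1, IsGap L a1 b1 ∧ 0 < b1 := by
    intro L hL p hp hppos
    obtain ⟨y, hy, hyne, hyd⟩ := hL.acc p hp (p/2) (by linarith)
    rw [abs_lt] at hyd
    rcases lt_or_gt_of_ne hyne with h | h
    · obtain ⟨a, b, hg, h1, -, -⟩ := hL.exists_gap_between hy hp h
      exact ⟨a, b, hg, by linarith [hg.1, hyd.1]⟩
    · obtain ⟨a, b, hg, h1, -, -⟩ := hL.exists_gap_between hp hy h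
      exact ⟨a, b, hg, by linarith [hg.1]⟩
  obtain ⟨q, hq⟩ := hne
  obtain ⟨p0, hp0K, hp0⟩ : ∃ p ∈ K, p ≠ 0 := by
    by_cases hq0 : q = 0
    · obtain ⟨y, hy, hyne, -⟩ := hnice.acc q hq 1 one_pos
      exact ⟨y, hy, by rw [hq0] at hyne; exact hyne⟩
    · exact ⟨q, hq, hq0⟩
  rcases lt_or_gt_of_ne hp0 with hneg | hpos
  · -- use -K
    have hniceN : NiceSet (Neg.neg '' K) := nice_neg hnice
    have hpN : -p0 ∈ Neg.neg '' K := ⟨p0, hp0K, rfl⟩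
    obtain ⟨a1, b1, hg1, hb1⟩ := hfind _ hniceN _ hpN (by linarith)
    have hmain := main_construction hniceN hg1 hb1 k G hT
    have hseteq : {f : G.edgeSet → ℝ |
        ∃ x : Fin (k + 1) → ℝ × ℝ, (∀ i, x i ∈ (Neg.neg '' K) ×ˢ (Neg.neg '' K)) ∧
          ∀ i j, (h : G.Adj i j) →
            f ⟨s(i, j), G.mem_edgeSet.mpr h⟩ =
              (x i).1 * (x j).1 + (x i).2 * (x j).2} =
        {f : G.edgeSet → ℝ |
        ∃ x : Fin (k + 1) → ℝ × ℝ, (∀ i, x i ∈ K ×ˢ K) ∧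
          ∀ i j, (h : G.Adj i j) →
            f ⟨s(i, j), G.mem_edgeSet.mpr h⟩ =
              (x i).1 * (x j).1 + (x i).2 * (x j).2} := by
      ext f
      constructor
      · rintro ⟨x, hx, hdot⟩
        refine ⟨fun i => (-(x i).1, -(x i).2), ?_, ?_⟩
        · intro i
          have hxi := hx i
          rw [Set.mem_prod] at hxi ⊢
          obtain ⟨⟨w1, hw1, hw1e⟩, ⟨w2, hw2, hw2e⟩⟩ := hxi
          constructor
          · show -(x i).1 ∈ K
            have : -w1 = (x i).1 := hw1e
            rw [← this, neg_neg]; exact hw1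
          · show -(x i).2 ∈ K
            have : -w2 = (x i).2 := hw2e
            rw [← this, neg_neg]; exact hw2
        · intro i j h
          rw [hdot i j h]; ring
      · rintro ⟨x, hx, hdot⟩
        refine ⟨fun i => (-(x i).1, -(x i).2), ?_, ?_⟩
        · intro i
          have hxi := hx i
          rw [Set.mem_prod] at hxi ⊢
          exact ⟨⟨(x i).1, hxi.1, rfl⟩, ⟨(x i).2, hxi.2, rfl⟩⟩
        · intro i j h
          rw [hdot i j h]; ring
    rw [hseteq] at hmain
    exact hmain
  · obtain ⟨a1, b1, hg1, hb1⟩ := hfind K hnice p0 hp0K hpos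
    exact main_construction hnice hg1 hb1 k G hT

end Final
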